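/- arXiv:1811.11911 — 3 statements merged into one kernel-verified Lean document; each statement's English description precedes it below -/
import Mathlib

section
/- Any network-level trace of interactions that a collection of clients can observe when communicating with the swap-server implementation model over a TCP-like network could also have been produced by the linear specification. Formally, the implementation model network-refines the linear specification: for every network trace tr, if there exists a server-side trace ts of impl_model with network_reordered ts tr, then there exists a server-side trace ds of linear_spec with network_reordered ds tr. -/
/-! ## Interaction trees -/

/-- Node shapes of an interaction tree over event signature `E` with result type `R`. -/
inductive ITreeShape (E : Type → Type) (R : Type) : Type 1
  | ret (r : R) : ITreeShape E R
  | tau : ITreeShape E R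
  | vis (X : Type) (e : E X) : ITreeShape E R

/-- The polynomial functor whose final coalgebra is the type of interaction trees. -/
def ITreeF (E : Type → Type) (R : Type) : PFunctor.{1, 1} :=
  ⟨ITreeShape E R, fun s =>
    match s with
    | .ret _ => PEmpty
    | .tau => PUnit
    | .vis X _ => ULift X⟩

/-- Interaction trees: the coinductive type with constructors `Ret`, `Tau` and `Vis`,
realized as the M-type (final coalgebra) of `ITreeF E R`. -/
def ITree (E : Type → Type) (R : Type) : Type 1 :=
  (ITreeF E R).M

namespace ITree

variable {E : Type → Type} {A B R S : Type}

/-- `Ret r`: the computation that halts returning `r`. -/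
def ret (r : R) : ITree E R :=
  PFunctor.M.mk ⟨ITreeShape.ret r, fun x => PEmpty.elim x⟩

/-- `Tau t`: a silent internal step followed by `t`. -/
def tau (t : ITree E R) : ITree E R :=
  PFunctor.M.mk ⟨ITreeShape.tau, fun _ => t⟩

/-- `Vis e k`: a visible event `e` awaiting an answer `x : X`, continuing as `k x`. -/
def vis {X : Type} (e : E X) (k : X → ITree E R) : ITree E R :=
  PFunctor.M.mk ⟨ITreeShape.vis X e, fun x => k x.down⟩

/-- Monadic bind: corecursively grafts `k r` at each leaf `Ret r`. -/
def bind (t : ITree E A) (k : A → ITree E R) : ITree E R :=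
  PFunctor.M.corec
    (fun s =>
      match s with
      | Sum.inl t' =>
        match PFunctor.M.dest t' with
        | ⟨ITreeShape.ret a, _⟩ =>
          match PFunctor.M.dest (k a) with
          | ⟨sh, ch⟩ => ⟨sh, fun b => Sum.inr (ch b)⟩
        | ⟨ITreeShape.tau, ch⟩ => ⟨ITreeShape.tau, fun b => Sum.inl (ch b)⟩
        | ⟨ITreeShape.vis X e, ch⟩ => ⟨ITreeShape.vis X e, fun b => Sum.inl (ch b)⟩
      | Sum.inr u =>
        match PFunctor.M.dest u with
        | ⟨sh, ch⟩ => ⟨sh, fun b => Sum.inr (ch b)⟩)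
    (Sum.inl t : ITree E A ⊕ ITree E R)

instance : Monad (ITree E) where
  pure := ret
  bind := bind

/-- Perform a single event and return its answer. -/
def trigger {X : Type} (e : E X) : ITree E X :=
  vis e ret

/-- The silently diverging tree: `spin = Tau spin`. -/
def spin : ITree E R :=
  PFunctor.M.corec (fun _ : PUnit.{2} => ⟨ITreeShape.tau, fun _ => PUnit.unit⟩) PUnit.unit

/-- Iterate a body `step` forever (a `CoFixpoint` loop threading a state `s : S`). -/
def loop (step : S → ITree E S) (s₀ : S) : ITree E Unit :=
  PFunctor.M.corec
    (fun t : ITree E S =>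
      match PFunctor.M.dest t with
      | ⟨ITreeShape.ret s, _⟩ => ⟨ITreeShape.tau, fun _ => step s⟩
      | ⟨ITreeShape.tau, ch⟩ => ⟨ITreeShape.tau, fun b => ch b⟩
      | ⟨ITreeShape.vis X e, ch⟩ => ⟨ITreeShape.vis X e, fun b => ch b⟩)
    (step s₀)

/-! ## Equivalence up to Tau (weak bisimulation) -/

/-- `Untaus t u`: `u` is obtained from `t` by removing finitely many leading `Tau`
nodes, and `u` does not itself start with a `Tau`. -/
inductive Untaus : ITree E R → ITree E R → Prop
  | base {t : ITree E R} (h : ∀ t', t ≠ tau t') : Untaus t t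
  | step {t u : ITree E R} (h : Untaus t u) : Untaus (tau t) u

/-- `t` converges to a non-`Tau` node after finitely many leading `Tau`s. -/
def FiniteTaus (t : ITree E R) : Prop := ∃ t', Untaus t t'

/-- Two trees with no leading `Tau` match up to `Rel`: both are the same `Ret`,
or both are `Vis` of the same event with continuations pointwise related by `Rel`. -/
def EqHead (Rel : ITree E R → ITree E R → Prop) (t u : ITree E R) : Prop :=
  (∃ r : R, t = ret r ∧ u = ret r) ∨
  (∃ (X : Type) (e : E X) (k k' : X → ITree E R),
      t = vis e k ∧ u = vis e k' ∧ ∀ x : X, Rel (k x) (k' x))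

/-- `Rel` is a weak bisimulation. -/
def IsEuttRel (Rel : ITree E R → ITree E R → Prop) : Prop :=
  ∀ t u, Rel t u →
    (FiniteTaus t ↔ FiniteTaus u) ∧
    (∀ t' u', Untaus t t' → Untaus u u' → EqHead Rel t' u')

/-- Equivalence up to `Tau`: the greatest weak bisimulation. -/
def Eutt (t u : ITree E R) : Prop :=
  ∃ Rel, IsEuttRel Rel ∧ Rel t u

/-! ## Traces -/

/-- An event together with the environment's answer. -/
structure EventE (E : Type → Type) : Type 1 where
  X : Type
  e : E X
  ans : X

/-- `IsTrace t tr r?` holds when `tr` lists, in order, the `Vis` events (with answers)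
along a finite `Tau`-skipping path of `t`, with `r? = some r` if the path ends at
`Ret r` and `none` otherwise. -/
inductive IsTrace : ITree E R → List (EventE E) → Option R → Prop
  | nil (t : ITree E R) : IsTrace t [] none
  | retEnd (r : R) : IsTrace (ITree.ret r) [] (some r)
  | tauStep {t : ITree E R} {tr r?} : IsTrace t tr r? → IsTrace (ITree.tau t) tr r?
  | visStep {X : Type} (e : E X) (x : X) {k : X → ITree E R} {tr r?} :
      IsTrace (k x) tr r? → IsTrace (ITree.vis e k) (⟨X, e, x⟩ :: tr) r?

/-- Trace refinement: every trace of `t` (with its optional result) is a trace of `u`. -/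
def Refines (t u : ITree E R) : Prop :=
  ∀ tr r?, IsTrace t tr r? → IsTrace u tr r?

end ITree
/-! ## The swap server and its network model -/

/-- Connection identifiers. -/
abbrev ConnectionId := ℕ

/-- Bytes. -/
abbrev Byte := UInt8

/-- The fixed size of swap messages. -/
def msgLen : ℕ := 1024

/-- Fixed-size messages. -/
def Message : Type := { l : List Byte // l.length = msgLen }

/-- The all-zeros message (the server's initial stored message). -/
def zeros : Message := ⟨List.replicate msgLen 0, by simp⟩

/-- Events observable over the network. -/
inductive NetworkEvent : Type
  | NewConnection (c : ConnectionId)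
  | ToServer (c : ConnectionId) (b : Byte)
  | FromServer (c : ConnectionId) (b : Byte)

/-- Network traces. -/
abbrev NetworkTrace := List NetworkEvent

/-- Status of a connection in the network. -/
inductive ConnectionStatus : Type
  | CLOSED
  | PENDING
  | ACCEPTED
  deriving DecidableEq

/-- Per-connection network state: a status and two FIFO buffers of in-flight bytes. -/
structure ConnectionNetState : Type where
  status : ConnectionStatus
  /-- bytes in flight from the client to the server -/
  toServer : List Byte
  /-- bytes in flight from the server to the client -/
  fromServer : List Byte

/-- A network state assigns to each connection a status and in-flight buffers. -/
def NetworkState : Type := ConnectionId → ConnectionNetState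

/-- The initial network state: all connections `CLOSED` with empty buffers. -/
def initial_ns : NetworkState := fun _ => ⟨ConnectionStatus.CLOSED, [], []⟩

/-- Update the state of one connection. -/
def updateNs (ns : NetworkState) (c : ConnectionId) (cs : ConnectionNetState) : NetworkState :=
  fun c' => if c' = c then cs else ns c'

/-- Labeled transitions of the network performed by the server:
accepting a pending connection, receiving from the head of the incoming buffer
(possible while `PENDING` or `ACCEPTED`), or emitting a byte (only on an
`ACCEPTED` connection, appended to the outgoing buffer). -/
def server_transition (ev : NetworkEvent) (ns ns' : NetworkState) : Prop :=
  match ev with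
  | NetworkEvent.NewConnection c =>
      (ns c).status = ConnectionStatus.PENDING ∧
      ns' = updateNs ns c { ns c with status := ConnectionStatus.ACCEPTED }
  | NetworkEvent.ToServer c b =>
      ((ns c).status = ConnectionStatus.PENDING ∨ (ns c).status = ConnectionStatus.ACCEPTED) ∧
      ∃ rest, (ns c).toServer = b :: rest ∧
        ns' = updateNs ns c { ns c with toServer := rest }
  | NetworkEvent.FromServer c b =>
      (ns c).status = ConnectionStatus.ACCEPTED ∧
      ns' = updateNs ns c { ns c with fromServer := (ns c).fromServer ++ [b] }

/-- Labeled transitions of the network performed by clients: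
opening a closed connection (making it `PENDING`), sending a byte
(appended to the incoming buffer), or receiving a byte from the head of the
outgoing buffer. -/
def client_transition (ev : NetworkEvent) (ns ns' : NetworkState) : Prop :=
  match ev with
  | NetworkEvent.NewConnection c =>
      (ns c).status = ConnectionStatus.CLOSED ∧
      ns' = updateNs ns c { ns c with status := ConnectionStatus.PENDING }
  | NetworkEvent.ToServer c b =>
      ((ns c).status = ConnectionStatus.PENDING ∨ (ns c).status = ConnectionStatus.ACCEPTED) ∧
      ns' = updateNs ns c { ns c with toServer := (ns c).toServer ++ [b] }
  | NetworkEvent.FromServer c b =>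
      (ns c).status = ConnectionStatus.ACCEPTED ∧
      ∃ rest, (ns c).fromServer = b :: rest ∧
        ns' = updateNs ns c { ns c with fromServer := rest }

/-- `network_reordered_ ns ts tc` holds iff, starting from state `ns`, there is an
interleaved execution of the network consisting of server transitions labeled, in
order, by `ts` and client transitions labeled, in order, by `tc`. -/
inductive network_reordered_ : NetworkState → NetworkTrace → NetworkTrace → Prop
  | nil (ns : NetworkState) : network_reordered_ ns [] []
  | server {ns ns' : NetworkState} {ev : NetworkEvent} {ts tc : NetworkTrace} :
      server_transition ev ns ns' → network_reordered_ ns' ts tc →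
      network_reordered_ ns (ev :: ts) tc
  | client {ns ns' : NetworkState} {ev : NetworkEvent} {ts tc : NetworkTrace} :
      client_transition ev ns ns' → network_reordered_ ns' ts tc →
      network_reordered_ ns ts (ev :: tc)

/-- Reordering by the network, starting from the initial (all-`CLOSED`) state. -/
def network_reordered (ts tc : NetworkTrace) : Prop :=
  network_reordered_ initial_ns ts tc

/-- The server side takes the sequence of steps labeled by `tr` from `ns` to `ns'`. -/
inductive server_transitions : NetworkTrace → NetworkState → NetworkState → Prop
  | nil (ns : NetworkState) : server_transitions [] ns ns
  | cons {ev : NetworkEvent} {tr : NetworkTrace} {ns ns' ns'' : NetworkState} :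
      server_transition ev ns ns' → server_transitions tr ns' ns'' →
      server_transitions (ev :: tr) ns ns''

/-! ### The linear specification -/

/-- Events of the linear specification: observing a new connection, a complete
message sent to the server, a complete message sent back by the server, and
(binary) nondeterministic choice. -/
inductive SpecE : Type → Type
  | obs_connect : SpecE ConnectionId
  | obs_msg_to_server (c : ConnectionId) : SpecE Message
  | obs_msg_from_server (c : ConnectionId) (msg : Message) : SpecE Unit
  | or : SpecE Bool

/-- Binary nondeterministic choice for specification trees. -/
def specOr {A : Type} (t u : ITree SpecE A) : ITree SpecE A :=
  ITree.vis SpecE.or (fun b => if b then t else u)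

/-- Nondeterministically choose an element of a list (built from binary choice). -/
def specChoose {A : Type} : List A → ITree SpecE A
  | [] => ITree.spin
  | x :: xs => specOr (ITree.ret x) (specChoose xs)

/-- One step of the linear specification: either accept a new connection, or pick
an open connection, receive a message on it, send back the last stored message,
and store the received one. -/
def specStep : List ConnectionId × Message → ITree SpecE (List ConnectionId × Message) :=
  fun st =>
    let conns := st.1
    let last_msg := st.2
    specOr
      (ITree.bind (ITree.trigger SpecE.obs_connect) fun c =>
        ITree.ret (c :: conns, last_msg))
      (ITree.bind (specChoose conns) fun c =>
        ITree.bind (ITree.trigger (SpecE.obs_msg_to_server c)) fun msg =>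
          ITree.bind (ITree.trigger (SpecE.obs_msg_from_server c last_msg)) fun _ =>
            ITree.ret (conns, msg))

/-- The linear specification, parameterized by the open connections and last message. -/
def linear_spec' (conns : List ConnectionId) (last_msg : Message) : ITree SpecE Unit :=
  ITree.loop specStep (conns, last_msg)

/-- The linear specification of the swap server. -/
def linear_spec : ITree SpecE Unit := linear_spec' [] zeros

/-! ### The implementation model -/

/-- Events of the implementation model: accepting a connection (possibly failing),
receiving a byte on a connection, sending a byte on a connection, and (binary)
nondeterministic choice. -/
inductive ImplE : Type → Type
  | accept : ImplE (Option ConnectionId)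
  | recv_byte (c : ConnectionId) : ImplE Byte
  | send_byte (c : ConnectionId) (b : Byte) : ImplE Unit
  | or : ImplE Bool

/-- Binary nondeterministic choice for implementation trees. -/
def implOr {A : Type} (t u : ITree ImplE A) : ITree ImplE A :=
  ITree.vis ImplE.or (fun b => if b then t else u)

/-- Nondeterministically choose an element of a list (built from binary choice). -/
def implChoose {A : Type} : List A → ITree ImplE A
  | [] => ITree.spin
  | x :: xs => implOr (ITree.ret x) (implChoose xs)

/-- Receive one byte on connection `c`. -/
def recv_byte (c : ConnectionId) : ITree ImplE Byte :=
  ITree.trigger (ImplE.recv_byte c)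

/-- Receive exactly `n` bytes on connection `c`. -/
def recv_bytes (c : ConnectionId) : ℕ → ITree ImplE (List Byte)
  | 0 => ITree.ret []
  | n + 1 =>
      ITree.bind (recv_byte c) fun b =>
        ITree.bind (recv_bytes c n) fun bs => ITree.ret (b :: bs)

/-- Send the bytes `bs` on connection `c`. -/
def send_bytes (c : ConnectionId) : List Byte → ITree ImplE Unit
  | [] => ITree.ret ()
  | b :: bs => ITree.bind (ITree.trigger (ImplE.send_byte c b)) fun _ => send_bytes c bs

/-- Per-connection state machine states of the server. -/
inductive ConnState : Type
  | RECVING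
  | SENDING
  | DELETED
  deriving DecidableEq

/-- A connection structure of the server: an id, a state, and receive/send buffers. -/
structure Connection : Type where
  conn_id : ConnectionId
  state : ConnState
  recvBuf : List Byte
  sendBuf : List Byte

/-- Whether a connection structure is in state `st`. -/
def has_conn_state (st : ConnState) (c : Connection) : Bool :=
  decide (c.state = st)

/-- Replace, in `l`, every element satisfying `p` by `c'`. -/
def replace_when (p : Connection → Bool) (c' : Connection) (l : List Connection) :
    List Connection :=
  l.map fun x => if p x then c' else x

/-- Service one connection: a `RECVING` connection receives some bytes into its
buffer and, upon completing a fixed-size message, swaps it with the stored message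
and moves to `SENDING`; a `SENDING` connection sends some prefix of its send
buffer, reverting to `RECVING` once the buffer is empty. -/
def process_conn (c : Connection) (last_full_msg : Message) :
    ITree ImplE (Connection × Message) :=
  match c.state with
  | ConnState.RECVING =>
      ITree.bind (implChoose (List.range (msgLen - c.recvBuf.length + 1))) fun n =>
        ITree.bind (recv_bytes c.conn_id n) fun bs =>
          let buf' := c.recvBuf ++ bs
          if h : buf'.length = msgLen then
            ITree.ret
              ({ c with state := ConnState.SENDING, recvBuf := [],
                        sendBuf := last_full_msg.1 },
               ⟨buf', h⟩)
          else
            ITree.ret ({ c with recvBuf := buf' }, last_full_msg)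
  | ConnState.SENDING =>
      ITree.bind (implChoose (List.range (c.sendBuf.length + 1))) fun n =>
        ITree.bind (send_bytes c.conn_id (c.sendBuf.take n)) fun _ =>
          let rest := c.sendBuf.drop n
          if rest.isEmpty then
            ITree.ret ({ c with state := ConnState.RECVING, sendBuf := [] }, last_full_msg)
          else
            ITree.ret ({ c with sendBuf := rest }, last_full_msg)
  | ConnState.DELETED => ITree.ret (c, last_full_msg)

/-- Accept a new connection (the environment may refuse). -/
def accept_connection : ITree ImplE (Option Connection) :=
  ITree.bind (ITree.trigger ImplE.accept) fun r =>
    match r with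
    | some cid => ITree.ret (some ⟨cid, ConnState.RECVING, [], []⟩)
    | none => ITree.ret none

/-- Body of the main loop of the implementation model: either accept a new
connection, or choose a `RECVING` or `SENDING` connection and service it. -/
def select_loop_body (server_st : List Connection × Message) :
    ITree ImplE (List Connection × Message) :=
  let conns := server_st.1
  let last_full_msg := server_st.2
  implOr
    (ITree.bind accept_connection fun r =>
      match r with
      | some c => ITree.ret (c :: conns, last_full_msg)
      | none => ITree.ret (conns, last_full_msg))
    (ITree.bind
      (implChoose
        (conns.filter (has_conn_state ConnState.RECVING) ++
         conns.filter (has_conn_state ConnState.SENDING))) fun c =>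
      ITree.bind (process_conn c last_full_msg) fun new_st =>
        let c' := new_st.1
        let last_full_msg' := new_st.2
        let conns' :=
          replace_when
            (fun x =>
              if has_conn_state ConnState.RECVING x || has_conn_state ConnState.SENDING x
              then decide (x.conn_id = c'.conn_id)
              else false)
            c' conns
        ITree.ret (conns', last_full_msg'))

/-- The implementation model: iterate `select_loop_body` forever from the empty
connection list and the all-zeros stored message. -/
def impl_model : ITree ImplE Unit :=
  ITree.loop select_loop_body ([], zeros)

/-! ### Converting ITree traces to network traces -/

/-- The evident conversion of specification events (with answers) to network events. -/
def specEventToNet : ITree.EventE SpecE → List NetworkEvent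
  | ⟨_, SpecE.obs_connect, c⟩ => [NetworkEvent.NewConnection c]
  | ⟨_, SpecE.obs_msg_to_server c, msg⟩ => msg.1.map (NetworkEvent.ToServer c)
  | ⟨_, SpecE.obs_msg_from_server c msg, _⟩ => msg.1.map (NetworkEvent.FromServer c)
  | ⟨_, SpecE.or, _⟩ => []

/-- The evident conversion of implementation events (with answers) to network events. -/
def implEventToNet : ITree.EventE ImplE → List NetworkEvent
  | ⟨_, ImplE.accept, some c⟩ => [NetworkEvent.NewConnection c]
  | ⟨_, ImplE.accept, none⟩ => []
  | ⟨_, ImplE.recv_byte c, b⟩ => [NetworkEvent.ToServer c b]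
  | ⟨_, ImplE.send_byte c b, _⟩ => [NetworkEvent.FromServer c b]
  | ⟨_, ImplE.or, _⟩ => []

/-- `tr` is a network trace of the specification tree `spec`. -/
def is_spec_trace (spec : ITree SpecE Unit) (tr : NetworkTrace) : Prop :=
  ∃ (etr : List (ITree.EventE SpecE)) (r? : Option Unit),
    ITree.IsTrace spec etr r? ∧ tr = (etr.map specEventToNet).flatten

/-- `tr` is a network trace of the implementation tree `impl`. -/
def is_impl_trace (impl : ITree ImplE Unit) (tr : NetworkTrace) : Prop :=
  ∃ (etr : List (ITree.EventE ImplE)) (r? : Option Unit),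
    ITree.IsTrace impl etr r? ∧ tr = (etr.map implEventToNet).flatten

/-! ### The step-indexed refinement relation -/

/-- The reasoning state: the current network state, the remaining specification
tree, and bookkeeping of the bytes received so far on each connection. -/
structure SState : Type 1 where
  get_ns : NetworkState
  get_spec : ITree SpecE Unit
  get_inbytes : ConnectionId → List Byte

/-- Functional update of the network-state component. -/
def set_ns (ns : NetworkState) (s : SState) : SState := { s with get_ns := ns }

/-- Functional update of the specification component. -/
def set_spec (spec : ITree SpecE Unit) (s : SState) : SState := { s with get_spec := spec }

/-- Status of connection `c` in the network-state component of `s`. -/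
def get_status (s : SState) (c : ConnectionId) : ConnectionStatus :=
  (s.get_ns c).status

/-- Append `bs` to the record of bytes received from connection `c`. -/
def append_inbytes (c : ConnectionId) (bs : List Byte) (s : SState) : SState :=
  { s with get_inbytes := fun c' => if c' = c then s.get_inbytes c' ++ bs else s.get_inbytes c' }

/-- `tr` is an implementation trace of `impl` of at most `z` observable steps,
relative to the reasoning state `s`. -/
def is_impl_trace_ (z : ℕ) (_s : SState) (impl : ITree ImplE Unit) (tr : NetworkTrace) :
    Prop :=
  is_impl_trace impl tr ∧ tr.length ≤ z

/-- The generalized (step-indexed) network-refinement relation. -/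
def nrefines_ (z : ℕ) (s : SState) (impl : ITree ImplE Unit) : Prop :=
  ∀ tr, is_impl_trace_ z s impl tr →
    ∃ dstr : NetworkTrace,
      network_reordered_ s.get_ns dstr tr ∧ is_spec_trace s.get_spec dstr


/-! ## Auxiliary ITree metatheory -/

namespace ITree

variable {E : Type → Type} {A R S : Type}

theorem eq_of_dest_eq {t u : ITree E R} (h : PFunctor.M.dest t = PFunctor.M.dest u) :
    t = u := by
  rw [← PFunctor.M.mk_dest t, ← PFunctor.M.mk_dest u, h]

theorem dest_ret (r : R) :
    PFunctor.M.dest (ret (E := E) r) = ⟨ITreeShape.ret r, fun x => PEmpty.elim x⟩ := rfl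

theorem dest_tau (t : ITree E R) :
    PFunctor.M.dest (tau t) = ⟨ITreeShape.tau, fun _ => t⟩ := rfl

theorem dest_vis {X : Type} (e : E X) (k : X → ITree E R) :
    PFunctor.M.dest (vis e k) = ⟨ITreeShape.vis X e, fun x => k x.down⟩ := rfl

theorem cases_tree (t : ITree E R) :
    (∃ r, t = ret r) ∨ (∃ t', t = tau t') ∨
      (∃ (X : Type) (e : E X) (k : X → ITree E R), t = vis e k) := by
  have h := (PFunctor.M.mk_dest t).symm
  rcases hd : PFunctor.M.dest t with ⟨s, ch⟩
  rw [hd] at h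
  cases s with
  | ret r =>
      left; refine ⟨r, ?_⟩
      rw [h]; unfold ITree.ret
      exact congrArg PFunctor.M.mk (Sigma.ext rfl (heq_of_eq (funext fun x => x.elim)))
  | tau =>
      right; left; refine ⟨ch PUnit.unit, ?_⟩
      rw [h]; unfold ITree.tau
      exact congrArg PFunctor.M.mk (Sigma.ext rfl (heq_of_eq (funext fun x => by cases x; rfl)))
  | vis X e =>
      right; right; refine ⟨X, e, fun x => ch ⟨x⟩, ?_⟩
      rw [h]; unfold ITree.vis
      exact congrArg PFunctor.M.mk (Sigma.ext rfl (heq_of_eq (funext fun x => by cases x; rfl)))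

theorem tau_inj {t u : ITree E R} (h : tau t = tau u) : t = u := by
  have h' := PFunctor.M.mk_inj h
  injection h' with h1 h2
  exact congrFun h2 PUnit.unit

theorem vis_inj {X X' : Type} {e : E X} {e' : E X'} {k : X → ITree E R} {k' : X' → ITree E R}
    (h : vis e k = vis e' k') :
    ∃ hX : X = X', HEq e e' ∧ HEq k k' := by
  have h' := PFunctor.M.mk_inj h
  injection h' with h1 h2
  injection h1 with hX hE
  subst hX
  refine ⟨rfl, hE, ?_⟩
  have h3 := eq_of_heq h2
  refine heq_of_eq (funext fun x => ?_)
  exact congrFun h3 ⟨x⟩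

theorem ret_ne_tau (r : R) (t : ITree E R) : ret (E := E) r ≠ tau t := by
  intro h
  have := congrArg (fun u => (PFunctor.M.dest u).1) h
  simp only [dest_ret, dest_tau] at this
  cases this

theorem ret_ne_vis {X : Type} (r : R) (e : E X) (k : X → ITree E R) : ret r ≠ vis e k := by
  intro h
  have := congrArg (fun u => (PFunctor.M.dest u).1) h
  simp only [dest_ret, dest_vis] at this
  cases this

theorem tau_ne_vis {X : Type} (t : ITree E R) (e : E X) (k : X → ITree E R) : tau t ≠ vis e k := by
  intro h
  have := congrArg (fun u => (PFunctor.M.dest u).1) h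
  simp only [dest_tau, dest_vis] at this
  cases this

theorem isTrace_cases {t : ITree E R} {tr r?} (h : IsTrace t tr r?) :
    (tr = [] ∧ r? = none) ∨
    (∃ r, t = ret r ∧ tr = [] ∧ r? = some r) ∨
    (∃ t', t = tau t' ∧ IsTrace t' tr r?) ∨
    (∃ (X : Type) (e : E X) (x : X) (k : X → ITree E R) (tr' : List (EventE E)),
        t = vis e k ∧ tr = ⟨X, e, x⟩ :: tr' ∧ IsTrace (k x) tr' r?) := by
  cases h with
  | nil t => exact Or.inl ⟨rfl, rfl⟩
  | retEnd r => exact Or.inr (Or.inl ⟨r, rfl, rfl, rfl⟩)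
  | tauStep h' => exact Or.inr (Or.inr (Or.inl ⟨_, rfl, h'⟩))
  | visStep e x h' => exact Or.inr (Or.inr (Or.inr ⟨_, e, x, _, _, rfl, rfl, h'⟩))

theorem isTrace_ret {r : R} {tr r?} (h : IsTrace (ret (E := E) r) tr r?) :
    tr = [] ∧ (r? = none ∨ r? = some r) := by
  rcases isTrace_cases h with ⟨h1, h2⟩ | ⟨r', he, h1, h2⟩ | ⟨t', he, _⟩ | ⟨X, e, x, k, tr', he, _⟩
  · exact ⟨h1, Or.inl h2⟩
  · have h' := PFunctor.M.mk_inj he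
    injection h' with hh _
    injection hh with hr
    subst hr
    exact ⟨h1, Or.inr h2⟩
  · exact absurd he (ret_ne_tau _ _)
  · exact absurd he (ret_ne_vis _ _ _)

theorem isTrace_tau {t : ITree E R} {tr r?} (h : IsTrace (tau t) tr r?) :
    IsTrace t tr r? := by
  rcases isTrace_cases h with ⟨h1, h2⟩ | ⟨r', he, _⟩ | ⟨t', he, h'⟩ | ⟨X, e, x, k, tr', he, _⟩
  · subst h1; subst h2; exact IsTrace.nil t
  · exact absurd he.symm (ret_ne_tau _ _)
  · rw [tau_inj he]; exact h'
  · exact absurd he (tau_ne_vis _ _ _)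

theorem isTrace_vis {X : Type} {e : E X} {k : X → ITree E R} {tr r?}
    (h : IsTrace (vis e k) tr r?) :
    (tr = [] ∧ r? = none) ∨
      ∃ (x : X) (tr' : List (EventE E)), tr = ⟨X, e, x⟩ :: tr' ∧ IsTrace (k x) tr' r? := by
  rcases isTrace_cases h with ⟨h1, h2⟩ | ⟨r', he, _⟩ | ⟨t', he, h'⟩ | ⟨X', e', x, k', tr', he, h1, h2⟩
  · exact Or.inl ⟨h1, h2⟩
  · exact absurd he.symm (ret_ne_vis _ _ _)
  · exact absurd he.symm (tau_ne_vis _ _ _)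
  · rcases vis_inj he with ⟨hX, hE, hK⟩
    subst hX
    have hE' := eq_of_heq hE
    subst hE'
    have hK' := eq_of_heq hK
    subst hK'
    exact Or.inr ⟨x, tr', h1, h2⟩

end ITree

namespace ITree

variable {E : Type → Type} {A R S : Type}

/-- The corecursion functional used by `bind`. -/
def bindF (k : A → ITree E R) :
    (ITree E A ⊕ ITree E R) → (ITreeF E R).Obj (ITree E A ⊕ ITree E R) := fun s =>
  match s with
  | Sum.inl t' =>
    match PFunctor.M.dest t' with
    | ⟨ITreeShape.ret a, _⟩ =>
      match PFunctor.M.dest (k a) with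
      | ⟨sh, ch⟩ => ⟨sh, fun b => Sum.inr (ch b)⟩
    | ⟨ITreeShape.tau, ch⟩ => ⟨ITreeShape.tau, fun b => Sum.inl (ch b)⟩
    | ⟨ITreeShape.vis X e, ch⟩ => ⟨ITreeShape.vis X e, fun b => Sum.inl (ch b)⟩
  | Sum.inr u =>
    match PFunctor.M.dest u with
    | ⟨sh, ch⟩ => ⟨sh, fun b => Sum.inr (ch b)⟩

theorem bind_def (t : ITree E A) (k : A → ITree E R) :
    bind t k = PFunctor.M.corec (bindF k) (Sum.inl t) := rfl

theorem bindF_inr (k : A → ITree E R) (u : ITree E R) :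
    PFunctor.M.corec (bindF k) (Sum.inr u) = u := by
  apply PFunctor.M.bisim (fun x y => x = PFunctor.M.corec (bindF k) (Sum.inr y))
  · intro x y hxy
    rcases hd : PFunctor.M.dest y with ⟨sh, ch⟩
    refine ⟨sh, fun b => PFunctor.M.corec (bindF k) (Sum.inr (ch b)), ch, ?_, rfl, fun i => rfl⟩
    rw [hxy, PFunctor.M.dest_corec]
    have : bindF k (Sum.inr y) = ⟨sh, fun b => Sum.inr (ch b)⟩ := by
      rw [show bindF k (Sum.inr y) =
            (match PFunctor.M.dest y with
             | ⟨sh, ch⟩ => ⟨sh, fun b => Sum.inr (ch b)⟩ :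
              (ITreeF E R).Obj (ITree E A ⊕ ITree E R)) from rfl, hd]
    rw [this]
    rfl
  · rfl

theorem bind_ret (a : A) (k : A → ITree E R) : bind (ret a) k = k a := by
  apply eq_of_dest_eq
  rw [bind_def, PFunctor.M.dest_corec]
  rcases hd : PFunctor.M.dest (k a) with ⟨sh, ch⟩
  have : bindF k (Sum.inl (ret a)) = ⟨sh, fun b => Sum.inr (ch b)⟩ := by
    rw [show bindF k (Sum.inl (ret a)) =
          (match PFunctor.M.dest (k a) with
           | ⟨sh, ch⟩ => ⟨sh, fun b => Sum.inr (ch b)⟩ :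
            (ITreeF E R).Obj (ITree E A ⊕ ITree E R)) from rfl, hd]
  rw [this, PFunctor.map_eq]
  refine Sigma.ext rfl (heq_of_eq (funext fun b => ?_))
  exact bindF_inr k (ch b)

theorem bind_tau (t : ITree E A) (k : A → ITree E R) : bind (tau t) k = tau (bind t k) := by
  apply eq_of_dest_eq
  rw [bind_def, PFunctor.M.dest_corec, dest_tau]
  have : bindF k (Sum.inl (tau t)) = ⟨ITreeShape.tau, fun _ => Sum.inl t⟩ := rfl
  rw [this]
  rfl

theorem bind_vis {X : Type} (e : E X) (h : X → ITree E A) (k : A → ITree E R) :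
    bind (vis e h) k = vis e (fun x => bind (h x) k) := by
  apply eq_of_dest_eq
  rw [bind_def, PFunctor.M.dest_corec, dest_vis]
  have : bindF k (Sum.inl (vis e h)) =
      ⟨ITreeShape.vis X e, fun b => Sum.inl (h b.down)⟩ := rfl
  rw [this]
  rfl

theorem spin_eq : spin (E := E) (R := R) = tau spin := by
  apply eq_of_dest_eq
  exact (PFunctor.M.dest_corec _ _).trans rfl

/-- The corecursion functional used by `loop`. -/
def loopF (step : S → ITree E S) :
    ITree E S → (ITreeF E Unit).Obj (ITree E S) := fun t =>
  match PFunctor.M.dest t with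
  | ⟨ITreeShape.ret s, _⟩ => ⟨ITreeShape.tau, fun _ => step s⟩
  | ⟨ITreeShape.tau, ch⟩ => ⟨ITreeShape.tau, fun b => ch b⟩
  | ⟨ITreeShape.vis X e, ch⟩ => ⟨ITreeShape.vis X e, fun b => ch b⟩

/-- The loop with an explicit intermediate tree. -/
def loopAux (step : S → ITree E S) (t : ITree E S) : ITree E Unit :=
  PFunctor.M.corec (loopF step) t

theorem loop_def (step : S → ITree E S) (s₀ : S) :
    loop step s₀ = loopAux step (step s₀) := rfl

theorem loopAux_ret (step : S → ITree E S) (s : S) :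
    loopAux step (ret s) = tau (loopAux step (step s)) := by
  apply eq_of_dest_eq
  rw [loopAux, PFunctor.M.dest_corec, dest_tau]
  have : loopF step (ret s) = ⟨ITreeShape.tau, fun _ => step s⟩ := rfl
  rw [this]
  rfl

theorem loopAux_tau (step : S → ITree E S) (t : ITree E S) :
    loopAux step (tau t) = tau (loopAux step t) := by
  apply eq_of_dest_eq
  rw [loopAux, PFunctor.M.dest_corec, dest_tau]
  have : loopF step (tau t) = ⟨ITreeShape.tau, fun _ => t⟩ := rfl
  rw [this]
  rfl

theorem loopAux_vis {X : Type} (step : S → ITree E S) (e : E X) (k : X → ITree E S) :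
    loopAux step (vis e k) = vis e (fun x => loopAux step (k x)) := by
  apply eq_of_dest_eq
  rw [loopAux, PFunctor.M.dest_corec, dest_vis]
  have : loopF step (vis e k) = ⟨ITreeShape.vis X e, fun b => k b.down⟩ := rfl
  rw [this]
  rfl

end ITree

namespace ITree

variable {E : Type → Type} {A R S : Type}

theorem isTrace_spin : ∀ {t : ITree E R} {tr r?}, IsTrace t tr r? → t = spin →
    tr = [] ∧ r? = none := by
  intro t tr r? h
  induction h with
  | nil t => exact fun _ => ⟨rfl, rfl⟩
  | retEnd r =>
      intro ht; rw [spin_eq] at ht; exact absurd ht (ret_ne_tau _ _)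
  | tauStep h' ih =>
      intro ht; rw [spin_eq] at ht
      exact ih (tau_inj ht)
  | visStep e x h' ih =>
      intro ht; rw [spin_eq] at ht; exact absurd ht.symm (tau_ne_vis _ _ _)

theorem isTrace_bind_none {k : A → ITree E R} :
    ∀ {t : ITree E A} {tr r?}, IsTrace t tr r? → r? = none →
      IsTrace (bind t k) tr none := by
  intro t tr r? h
  induction h with
  | nil t => exact fun _ => IsTrace.nil _
  | retEnd r => exact fun h => by cases h
  | tauStep h' ih => intro hn; rw [bind_tau]; exact IsTrace.tauStep (ih hn)
  | visStep e x h' ih => intro hn; rw [bind_vis]; exact IsTrace.visStep e x (ih hn)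

theorem isTrace_bind_some {k : A → ITree E R} {a : A} {tr₂ r?} :
    ∀ {t : ITree E A} {tr₁ o}, IsTrace t tr₁ o → o = some a →
      IsTrace (k a) tr₂ r? → IsTrace (bind t k) (tr₁ ++ tr₂) r? := by
  intro t tr₁ o h
  induction h with
  | nil t => exact fun h => by cases h
  | retEnd r =>
      intro ho h₂
      have : r = a := Option.some.inj ho
      subst this
      rw [bind_ret]
      simpa using h₂
  | tauStep h' ih =>
      intro ho h₂; rw [bind_tau]; exact IsTrace.tauStep (ih ho h₂)
  | visStep e x h' ih =>
      intro ho h₂; rw [bind_vis, List.cons_append]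
      exact IsTrace.visStep e x (ih ho h₂)

theorem isTrace_bind_inv {k : A → ITree E R} :
    ∀ {w tr r?}, IsTrace w tr r? → ∀ t : ITree E A, w = bind t k →
      (IsTrace t tr none ∧ r? = none) ∨
      ∃ tr₁ a tr₂, tr = tr₁ ++ tr₂ ∧ IsTrace t tr₁ (some a) ∧ IsTrace (k a) tr₂ r? := by
  intro w tr r? h
  induction h with
  | nil t => exact fun t _ => Or.inl ⟨IsTrace.nil t, rfl⟩
  | retEnd r =>
      intro t ht
      rcases cases_tree t with ⟨a, rfl⟩ | ⟨t', rfl⟩ | ⟨X, e, kk, rfl⟩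
      · rw [bind_ret] at ht
        right
        refine ⟨[], a, [], rfl, IsTrace.retEnd a, ?_⟩
        rw [← ht]; exact IsTrace.retEnd r
      · rw [bind_tau] at ht; exact absurd ht (ret_ne_tau _ _)
      · rw [bind_vis] at ht; exact absurd ht (ret_ne_vis _ _ _)
  | tauStep h' ih =>
      intro t ht
      rcases cases_tree t with ⟨a, rfl⟩ | ⟨t', rfl⟩ | ⟨X, e, kk, rfl⟩
      · rw [bind_ret] at ht
        right
        refine ⟨[], a, _, rfl, IsTrace.retEnd a, ?_⟩
        rw [← ht]; exact IsTrace.tauStep h'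
      · rw [bind_tau] at ht
        rcases ih t' (tau_inj ht) with ⟨hA, hB⟩ | ⟨tr₁, a, tr₂, rfl, hA, hB⟩
        · exact Or.inl ⟨IsTrace.tauStep hA, hB⟩
        · exact Or.inr ⟨tr₁, a, tr₂, rfl, IsTrace.tauStep hA, hB⟩
      · rw [bind_vis] at ht; exact absurd ht (tau_ne_vis _ _ _)
  | @visStep X e x k₀ tr r? h' ih =>
      intro t ht
      rcases cases_tree t with ⟨a, rfl⟩ | ⟨t', rfl⟩ | ⟨X', e', kk, rfl⟩
      · rw [bind_ret] at ht
        right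
        refine ⟨[], a, _, rfl, IsTrace.retEnd a, ?_⟩
        rw [← ht]; exact IsTrace.visStep e x h'
      · rw [bind_tau] at ht; exact absurd ht.symm (tau_ne_vis _ _ _)
      · rw [bind_vis] at ht
        rcases vis_inj ht with ⟨hX, hE, hK⟩
        subst hX
        have hE' := eq_of_heq hE
        subst hE'
        have hK' := eq_of_heq hK
        rcases ih (kk x) (congrFun hK' x) with ⟨hA, hB⟩ | ⟨tr₁, a, tr₂, rfl, hA, hB⟩
        · exact Or.inl ⟨IsTrace.visStep e x hA, hB⟩
        · exact Or.inr ⟨⟨X, e, x⟩ :: tr₁, a, tr₂, by simp, IsTrace.visStep e x hA, hB⟩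

/-- Traces of the body iteration of a loop. -/
inductive LoopT (step : S → ITree E S) : ITree E S → List (EventE E) → Prop
  | pre {u tr} : IsTrace u tr none → LoopT step u tr
  | more {u tr₁ s tr₂} :
      IsTrace u tr₁ (some s) → LoopT step (step s) tr₂ → LoopT step u (tr₁ ++ tr₂)

theorem loopT_tau {step : S → ITree E S} {u tr} (h : LoopT step u tr) :
    LoopT step (tau u) tr := by
  cases h with
  | pre h' => exact LoopT.pre (IsTrace.tauStep h')
  | more h₁ h₂ => exact LoopT.more (IsTrace.tauStep h₁) h₂

theorem loopT_vis {step : S → ITree E S} {X : Type} {e : E X} {x : X}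
    {k : X → ITree E S} {tr} (h : LoopT step (k x) tr) :
    LoopT step (vis e k) (⟨X, e, x⟩ :: tr) := by
  cases h with
  | pre h' => exact LoopT.pre (IsTrace.visStep e x h')
  | @more _ tr₁ s tr₂ h₁ h₂ =>
      rw [← List.cons_append]
      exact LoopT.more (IsTrace.visStep e x h₁) h₂

theorem isTrace_loopAux_inv {step : S → ITree E S} :
    ∀ {w : ITree E Unit} {tr r?}, IsTrace w tr r? → ∀ u, w = loopAux step u →
      r? = none ∧ LoopT step u tr := by
  intro w tr r? h
  induction h with
  | nil t => exact fun u _ => ⟨rfl, LoopT.pre (IsTrace.nil u)⟩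
  | retEnd r =>
      intro u ht
      rcases cases_tree u with ⟨s, rfl⟩ | ⟨u', rfl⟩ | ⟨X, e, kk, rfl⟩
      · rw [loopAux_ret] at ht; exact absurd ht (ret_ne_tau _ _)
      · rw [loopAux_tau] at ht; exact absurd ht (ret_ne_tau _ _)
      · rw [loopAux_vis] at ht; exact absurd ht (ret_ne_vis _ _ _)
  | tauStep h' ih =>
      intro u ht
      rcases cases_tree u with ⟨s, rfl⟩ | ⟨u', rfl⟩ | ⟨X, e, kk, rfl⟩
      · rw [loopAux_ret] at ht
        rcases ih _ (tau_inj ht) with ⟨hn, hL⟩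
        refine ⟨hn, ?_⟩
        simpa using LoopT.more (IsTrace.retEnd s) hL
      · rw [loopAux_tau] at ht
        rcases ih _ (tau_inj ht) with ⟨hn, hL⟩
        exact ⟨hn, loopT_tau hL⟩
      · rw [loopAux_vis] at ht; exact absurd ht (tau_ne_vis _ _ _)
  | @visStep X e x k₀ tr r? h' ih =>
      intro u ht
      rcases cases_tree u with ⟨s, rfl⟩ | ⟨u', rfl⟩ | ⟨X', e', kk, rfl⟩
      · rw [loopAux_ret] at ht; exact absurd ht.symm (tau_ne_vis _ _ _)
      · rw [loopAux_tau] at ht; exact absurd ht.symm (tau_ne_vis _ _ _)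
      · rw [loopAux_vis] at ht
        rcases vis_inj ht with ⟨hX, hE, hK⟩
        subst hX
        have hE' := eq_of_heq hE
        subst hE'
        have hK' := eq_of_heq hK
        rcases ih (kk x) (congrFun hK' x) with ⟨hn, hL⟩
        exact ⟨hn, loopT_vis hL⟩

theorem isTrace_loop_inv {step : S → ITree E S} {s₀ tr r?}
    (h : IsTrace (loop step s₀) tr r?) : r? = none ∧ LoopT step (step s₀) tr :=
  isTrace_loopAux_inv h (step s₀) (loop_def step s₀)

theorem isTrace_loopAux_none {step : S → ITree E S} :
    ∀ {u tr r?}, IsTrace u tr r? → r? = none → IsTrace (loopAux step u) tr none := by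
  intro u tr r? h
  induction h with
  | nil t => exact fun _ => IsTrace.nil _
  | retEnd r => exact fun h => by cases h
  | tauStep h' ih => intro hn; rw [loopAux_tau]; exact IsTrace.tauStep (ih hn)
  | visStep e x h' ih => intro hn; rw [loopAux_vis]; exact IsTrace.visStep e x (ih hn)

theorem isTrace_loopAux_some {step : S → ITree E S} {s : S} {tr₂ : List (EventE E)} :
    ∀ {u tr₁ o}, IsTrace u tr₁ o → o = some s →
      IsTrace (loopAux step (step s)) tr₂ none →
      IsTrace (loopAux step u) (tr₁ ++ tr₂) none := by
  intro u tr₁ o h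
  induction h with
  | nil t => exact fun h => by cases h
  | retEnd r =>
      intro ho h₂
      have : r = s := Option.some.inj ho
      subst this
      rw [loopAux_ret]
      simpa using IsTrace.tauStep h₂
  | tauStep h' ih =>
      intro ho h₂; rw [loopAux_tau]; exact IsTrace.tauStep (ih ho h₂)
  | visStep e x h' ih =>
      intro ho h₂; rw [loopAux_vis, List.cons_append]
      exact IsTrace.visStep e x (ih ho h₂)

theorem loopT_sound {step : S → ITree E S} :
    ∀ {u tr}, LoopT step u tr → IsTrace (loopAux step u) tr none := by
  intro u tr h
  induction h with
  | pre h' => exact isTrace_loopAux_none h' rfl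
  | more h₁ _ ih => exact isTrace_loopAux_some h₁ rfl ih

end ITree

/-! ## The per-event server machine -/

/-- Flatten an implementation event trace to a network trace. -/
def implFlat (etr : List (ITree.EventE ImplE)) : NetworkTrace :=
  (etr.map implEventToNet).flatten

/-- Flatten a specification event trace to a network trace. -/
def specFlat (etr : List (ITree.EventE SpecE)) : NetworkTrace :=
  (etr.map specEventToNet).flatten

@[simp] theorem implFlat_nil : implFlat [] = [] := rfl

@[simp] theorem implFlat_cons (e : ITree.EventE ImplE) (t : List (ITree.EventE ImplE)) :
    implFlat (e :: t) = implEventToNet e ++ implFlat t := rfl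

@[simp] theorem implFlat_append (a b : List (ITree.EventE ImplE)) :
    implFlat (a ++ b) = implFlat a ++ implFlat b := by
  simp [implFlat]

@[simp] theorem specFlat_nil : specFlat [] = [] := rfl

@[simp] theorem specFlat_cons (e : ITree.EventE SpecE) (t : List (ITree.EventE SpecE)) :
    specFlat (e :: t) = specEventToNet e ++ specFlat t := rfl

@[simp] theorem specFlat_append (a b : List (ITree.EventE SpecE)) :
    specFlat (a ++ b) = specFlat a ++ specFlat b := by
  simp [specFlat]

/-- Server machine state. -/
abbrev ServerSt := List Connection × Message

/-- The replacement predicate used by the implementation. -/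
def pfor (cid : ConnectionId) (x : Connection) : Bool :=
  if has_conn_state ConnState.RECVING x || has_conn_state ConnState.SENDING x
  then decide (x.conn_id = cid) else false

/-- Update of a `RECVING` connection that received bytes `bs`. -/
def recvUpd (conn : Connection) (bs : List Byte) (m : Message) : Connection × Message :=
  if h : (conn.recvBuf ++ bs).length = msgLen then
    ({ conn with state := ConnState.SENDING, recvBuf := [], sendBuf := m.1 },
      ⟨conn.recvBuf ++ bs, h⟩)
  else ({ conn with recvBuf := conn.recvBuf ++ bs }, m)

/-- Update of a `SENDING` connection that sent `n` bytes. -/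
def sendUpd (conn : Connection) (n : ℕ) : Connection :=
  if (conn.sendBuf.drop n).isEmpty then { conn with state := ConnState.RECVING, sendBuf := [] }
  else { conn with sendBuf := conn.sendBuf.drop n }

/-- A single observable step of the server machine. -/
def SStep (σ : ServerSt) (ev : NetworkEvent) (σ' : ServerSt) : Prop :=
  match ev with
  | NetworkEvent.NewConnection c =>
      σ' = (⟨c, ConnState.RECVING, [], []⟩ :: σ.1, σ.2)
  | NetworkEvent.ToServer c b =>
      ∃ conn, conn ∈ σ.1 ∧ conn.conn_id = c ∧ conn.state = ConnState.RECVING ∧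
        σ' = (replace_when (pfor c) (recvUpd conn [b] σ.2).1 σ.1, (recvUpd conn [b] σ.2).2)
  | NetworkEvent.FromServer c b =>
      ∃ conn rest, conn ∈ σ.1 ∧ conn.conn_id = c ∧ conn.state = ConnState.SENDING ∧
        conn.sendBuf = b :: rest ∧
        σ' = (replace_when (pfor c) (sendUpd conn 1) σ.1, σ.2)

/-- A silent step of the server machine. -/
def EStep (σ σ' : ServerSt) : Prop :=
  (∃ conn, conn ∈ σ.1 ∧ conn.state = ConnState.RECVING ∧
      σ' = (replace_when (pfor conn.conn_id) (recvUpd conn [] σ.2).1 σ.1,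
        (recvUpd conn [] σ.2).2)) ∨
  (∃ conn, conn ∈ σ.1 ∧ conn.state = ConnState.SENDING ∧
      σ' = (replace_when (pfor conn.conn_id) (sendUpd conn 0) σ.1, σ.2)) ∨
  σ' = σ

/-- Multi-step runs of the server machine. -/
inductive MSteps : ServerSt → NetworkTrace → ServerSt → Prop
  | nil (σ : ServerSt) : MSteps σ [] σ
  | eps {σ σ' σ'' ts} : EStep σ σ' → MSteps σ' ts σ'' → MSteps σ ts σ''
  | step {σ σ' σ'' ev ts} : SStep σ ev σ' → MSteps σ' ts σ'' → MSteps σ (ev :: ts) σ''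

theorem MSteps.append {σ σ' σ'' a b} (h₁ : MSteps σ a σ') (h₂ : MSteps σ' b σ'') :
    MSteps σ (a ++ b) σ'' := by
  induction h₁ with
  | nil => exact h₂
  | eps he _ ih => exact MSteps.eps he (ih h₂)
  | step hs _ ih => exact MSteps.step hs (ih h₂)

/-- Well-formedness of a connection structure. -/
def WFconn (c : Connection) : Prop :=
  (c.state = ConnState.RECVING → c.recvBuf.length < msgLen ∧ c.sendBuf = []) ∧
  (c.state = ConnState.SENDING → c.recvBuf = [] ∧ c.sendBuf ≠ [])

/-- Well-formedness of the connection list. -/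
def WF (l : List Connection) : Prop := ∀ c ∈ l, WFconn c

theorem replace_when_comp {p : Connection → Bool} {c₁ c₂ : Connection} {l : List Connection}
    (h : p c₁ = true) :
    replace_when p c₂ (replace_when p c₁ l) = replace_when p c₂ l := by
  simp only [replace_when, List.map_map]
  apply List.map_congr_left
  intro x _
  by_cases hx : p x <;> simp [hx, h]

theorem mem_replace_when {p : Connection → Bool} {c' conn : Connection} {l : List Connection}
    (h : conn ∈ l) (hp : p conn = true) : c' ∈ replace_when p c' l := by
  simp only [replace_when, List.mem_map]
  exact ⟨conn, h, by simp [hp]⟩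

theorem mem_replace_when_elim {p : Connection → Bool} {c' x : Connection} {l : List Connection}
    (h : x ∈ replace_when p c' l) : x = c' ∨ x ∈ l := by
  simp only [replace_when, List.mem_map] at h
  rcases h with ⟨y, hy, hyx⟩
  by_cases hp : p y <;> simp [hp] at hyx
  · exact Or.inl hyx.symm
  · exact Or.inr (hyx ▸ hy)

theorem map_conn_id_replace_when {cid : ConnectionId} {c' : Connection} {l : List Connection}
    (h : c'.conn_id = cid) :
    (replace_when (pfor cid) c' l).map Connection.conn_id = l.map Connection.conn_id := by
  simp only [replace_when, List.map_map]
  apply List.map_congr_left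
  intro x _
  by_cases hx : pfor cid x
  · simp only [Function.comp_apply, if_pos hx]
    have : x.conn_id = cid := by
      by_cases hrs : has_conn_state ConnState.RECVING x || has_conn_state ConnState.SENDING x
      · simpa [pfor, hrs] using hx
      · simp [pfor, hrs] at hx
    rw [h, this]
  · simp [hx]

theorem pfor_true {cid : ConnectionId} {x : Connection} (hid : x.conn_id = cid)
    (hst : x.state = ConnState.RECVING ∨ x.state = ConnState.SENDING) :
    pfor cid x = true := by
  rcases hst with hst | hst <;> simp [pfor, has_conn_state, hst, hid]

theorem pfor_id {cid : ConnectionId} {x : Connection} (h : pfor cid x = true) :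
    x.conn_id = cid := by
  by_cases hrs : has_conn_state ConnState.RECVING x || has_conn_state ConnState.SENDING x
  · simpa [pfor, hrs] using h
  · simp [pfor, hrs] at h

theorem recvUpd_conn_id (conn : Connection) (bs : List Byte) (m : Message) :
    ((recvUpd conn bs m).1).conn_id = conn.conn_id := by
  unfold recvUpd
  split <;> rfl

theorem sendUpd_conn_id (conn : Connection) (n : ℕ) :
    (sendUpd conn n).conn_id = conn.conn_id := by
  unfold sendUpd
  split <;> rfl

theorem msgLen_pos : 0 < msgLen := by norm_num [msgLen]

theorem message_ne_nil (m : Message) : m.1 ≠ [] := by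
  intro h
  have := m.2
  rw [h] at this
  simp at this
  exact absurd this.symm (Nat.ne_of_gt msgLen_pos)

theorem WFconn_recvUpd {conn : Connection} {bs : List Byte} {m : Message}
    (h : WFconn conn) (hst : conn.state = ConnState.RECVING)
    (hlen : conn.recvBuf.length + bs.length ≤ msgLen) :
    WFconn (recvUpd conn bs m).1 := by
  unfold recvUpd
  split
  · exact ⟨fun h2 => ConnState.noConfusion h2, fun _ => ⟨rfl, message_ne_nil m⟩⟩
  · next h1 =>
      refine ⟨fun _ => ⟨?_, (h.1 hst).2⟩, fun h2 => ?_⟩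
      · simp only [List.length_append] at h1 ⊢
        omega
      · exact absurd (hst ▸ h2) (fun hh => ConnState.noConfusion hh)

theorem WFconn_sendUpd {conn : Connection} {n : ℕ}
    (h : WFconn conn) (hst : conn.state = ConnState.SENDING) :
    WFconn (sendUpd conn n) := by
  unfold sendUpd
  split
  · refine ⟨fun _ => ⟨?_, rfl⟩, fun h2 => ConnState.noConfusion h2⟩
    rw [(h.2 hst).1]
    exact msgLen_pos
  · next h1 =>
    refine ⟨fun h2 => absurd (hst ▸ h2) (fun hh => ConnState.noConfusion hh),
      fun _ => ⟨(h.2 hst).1, ?_⟩⟩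
    intro hh
    exact h1 (List.isEmpty_iff.2 hh)

theorem WF_replace {p : Connection → Bool} {c' : Connection} {l : List Connection}
    (h : WF l) (hc : WFconn c') : WF (replace_when p c' l) := by
  intro x hx
  rcases mem_replace_when_elim hx with rfl | hx'
  · exact hc
  · exact h x hx'

theorem WF_SStep {σ σ' : ServerSt} {ev : NetworkEvent} (hwf : WF σ.1) (h : SStep σ ev σ') :
    WF σ'.1 := by
  cases ev with
  | NewConnection c =>
      simp only [SStep] at h
      subst h
      intro x hx
      rcases List.mem_cons.1 hx with rfl | hx'
      · exact ⟨fun _ => ⟨by simpa using msgLen_pos, rfl⟩, fun h2 => by exact ConnState.noConfusion h2⟩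
      · exact hwf x hx'
  | ToServer c b =>
      simp only [SStep] at h
      rcases h with ⟨conn, hmem, hid, hst, rfl⟩
      have hw := hwf conn hmem
      have hlen : conn.recvBuf.length + 1 ≤ msgLen := (hw.1 hst).1
      exact WF_replace hwf (WFconn_recvUpd hw hst (by simpa using hlen))
  | FromServer c b =>
      simp only [SStep] at h
      rcases h with ⟨conn, rest, hmem, hid, hst, hbuf, rfl⟩
      exact WF_replace hwf (WFconn_sendUpd (hwf conn hmem) hst)

theorem WF_EStep {σ σ' : ServerSt} (hwf : WF σ.1) (h : EStep σ σ') : WF σ'.1 := by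
  rcases h with ⟨conn, hmem, hst, rfl⟩ | ⟨conn, hmem, hst, rfl⟩ | rfl
  · have hw := hwf conn hmem
    exact WF_replace hwf (WFconn_recvUpd hw hst (by simpa using Nat.le_of_lt (hw.1 hst).1))
  · exact WF_replace hwf (WFconn_sendUpd (hwf conn hmem) hst)
  · exact hwf

theorem WF_MSteps {σ σ' : ServerSt} {ts} (hwf : WF σ.1) (h : MSteps σ ts σ') : WF σ'.1 := by
  induction h with
  | nil => exact hwf
  | eps he _ ih => exact ih (WF_EStep hwf he)
  | step hs _ ih => exact ih (WF_SStep hwf hs)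

@[simp] theorem implEventToNet_or (b : Bool) :
    implEventToNet ⟨Bool, ImplE.or, b⟩ = [] := rfl

@[simp] theorem implEventToNet_recv (c : ConnectionId) (b : Byte) :
    implEventToNet ⟨Byte, ImplE.recv_byte c, b⟩ = [NetworkEvent.ToServer c b] := rfl

@[simp] theorem implEventToNet_send (c : ConnectionId) (b : Byte) (u : Unit) :
    implEventToNet ⟨Unit, ImplE.send_byte c b, u⟩ = [NetworkEvent.FromServer c b] := rfl

@[simp] theorem implEventToNet_accept_some (c : ConnectionId) :
    implEventToNet ⟨Option ConnectionId, ImplE.accept, some c⟩ =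
      [NetworkEvent.NewConnection c] := rfl

@[simp] theorem implEventToNet_accept_none :
    implEventToNet ⟨Option ConnectionId, ImplE.accept, none⟩ = [] := rfl

theorem recvUpd_snoc (conn : Connection) (b : Byte) (bs : List Byte) (m : Message) :
    recvUpd { conn with recvBuf := conn.recvBuf ++ [b] } bs m = recvUpd conn (b :: bs) m := by
  cases conn
  simp [recvUpd, List.append_assoc]

theorem sendUpd_tail {conn : Connection} {b : Byte} {rest : List Byte}
    (hb : conn.sendBuf = b :: rest) (n : ℕ) :
    sendUpd { conn with sendBuf := rest } n = sendUpd conn (n + 1) := by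
  cases conn
  simp only at hb
  subst hb
  simp [sendUpd]

theorem recv_steps : ∀ (bs : List Byte) (conn : Connection) (σ : ServerSt),
    conn ∈ σ.1 → conn.state = ConnState.RECVING →
    conn.recvBuf.length + bs.length ≤ msgLen →
    MSteps σ (bs.map (NetworkEvent.ToServer conn.conn_id))
      (replace_when (pfor conn.conn_id) (recvUpd conn bs σ.2).1 σ.1,
        (recvUpd conn bs σ.2).2) := by
  intro bs
  induction bs with
  | nil =>
      intro conn σ hmem hst _
      exact MSteps.eps (Or.inl ⟨conn, hmem, hst, rfl⟩) (MSteps.nil _)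
  | cons b bs ih =>
      intro conn σ hmem hst hlen
      by_cases hc : (conn.recvBuf ++ [b]).length = msgLen
      · have hbs0 : bs = [] := by
          simp only [List.length_append, List.length_singleton] at hc
          simp only [List.length_cons] at hlen
          cases bs with
          | nil => rfl
          | cons x xs => simp only [List.length_cons] at hlen; omega
        subst hbs0
        exact MSteps.step (ev := NetworkEvent.ToServer conn.conn_id b)
          ⟨conn, hmem, rfl, hst, rfl⟩ (MSteps.nil _)
      · set c₁ : Connection := { conn with recvBuf := conn.recvBuf ++ [b] } with hc₁
        have hid : c₁.conn_id = conn.conn_id := rfl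
        have hst₁ : c₁.state = ConnState.RECVING := hst
        have hr1 : recvUpd conn [b] σ.2 = (c₁, σ.2) := by
          unfold recvUpd; rw [dif_neg hc]
        refine MSteps.step (ev := NetworkEvent.ToServer conn.conn_id b)
          (σ' := (replace_when (pfor conn.conn_id) c₁ σ.1, σ.2))
          ⟨conn, hmem, rfl, hst, by rw [hr1]⟩ ?_
        have hmem' : c₁ ∈ replace_when (pfor conn.conn_id) c₁ σ.1 :=
          mem_replace_when hmem (pfor_true rfl (Or.inl hst))
        have hlen' : c₁.recvBuf.length + bs.length ≤ msgLen := by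
          show (conn.recvBuf ++ [b]).length + bs.length ≤ msgLen
          simp only [List.length_append, List.length_singleton]
          simp only [List.length_cons] at hlen
          omega
        have ihh := ih c₁ (replace_when (pfor conn.conn_id) c₁ σ.1, σ.2) hmem' hst₁ hlen'
        rw [hid] at ihh
        rw [show (recvUpd c₁ bs σ.2) = recvUpd conn (b :: bs) σ.2 from recvUpd_snoc conn b bs σ.2] at ihh
        rw [replace_when_comp (pfor_true hid (Or.inl hst₁))] at ihh
        exact ihh

theorem send_steps : ∀ (n : ℕ) (conn : Connection) (σ : ServerSt),
    conn ∈ σ.1 → conn.state = ConnState.SENDING →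
    MSteps σ ((conn.sendBuf.take n).map (NetworkEvent.FromServer conn.conn_id))
      (replace_when (pfor conn.conn_id) (sendUpd conn n) σ.1, σ.2) := by
  intro n
  induction n with
  | zero =>
      intro conn σ hmem hst
      exact MSteps.eps (Or.inr (Or.inl ⟨conn, hmem, hst, rfl⟩)) (MSteps.nil _)
  | succ n ih =>
      intro conn σ hmem hst
      rcases hb : conn.sendBuf with _ | ⟨b, rest⟩
      · simp only [List.take_nil, List.map_nil]
        rw [show sendUpd conn (n + 1) = sendUpd conn 0 from by simp [sendUpd, hb]]
        exact MSteps.eps (Or.inr (Or.inl ⟨conn, hmem, hst, rfl⟩)) (MSteps.nil _)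
      · simp only [List.take_succ_cons, List.map_cons]
        have hs1 : sendUpd conn 1 =
            (if rest.isEmpty then { conn with state := ConnState.RECVING, sendBuf := [] }
             else { conn with sendBuf := rest }) := by
          simp [sendUpd, hb]
        cases rest with
        | nil =>
            simp only [List.take_nil, List.map_nil]
            rw [show sendUpd conn (n + 1) = sendUpd conn 1 from by simp [sendUpd, hb]]
            exact MSteps.step (ev := NetworkEvent.FromServer conn.conn_id b)
              ⟨conn, [], hmem, rfl, hst, hb, rfl⟩ (MSteps.nil _)
        | cons r rs =>
            set c₁ : Connection := { conn with sendBuf := r :: rs } with hc₁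
            have hid : c₁.conn_id = conn.conn_id := rfl
            have hst₁ : c₁.state = ConnState.SENDING := hst
            refine MSteps.step (ev := NetworkEvent.FromServer conn.conn_id b)
              (σ' := (replace_when (pfor conn.conn_id) c₁ σ.1, σ.2))
              ⟨conn, r :: rs, hmem, rfl, hst, hb, by rw [hs1]; simp⟩ ?_
            have hmem' : c₁ ∈ replace_when (pfor conn.conn_id) c₁ σ.1 :=
              mem_replace_when hmem (pfor_true rfl (Or.inr hst))
            have hbuf₁ : c₁.sendBuf = r :: rs := rfl
            have ihh := ih c₁ (replace_when (pfor conn.conn_id) c₁ σ.1, σ.2) hmem' hst₁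
            rw [hid, hbuf₁] at ihh
            rw [show sendUpd c₁ n = sendUpd conn (n + 1) from sendUpd_tail hb n] at ihh
            rw [replace_when_comp (pfor_true hid (Or.inr hst₁))] at ihh
            exact ihh

namespace ITree

theorem isTrace_trigger {E : Type → Type} {X : Type} {e : E X} {etr r?}
    (h : IsTrace (trigger e) etr r?) :
    (etr = [] ∧ r? = none) ∨ ∃ x, etr = [⟨X, e, x⟩] ∧ (r? = none ∨ r? = some x) := by
  rcases isTrace_vis h with ⟨rfl, rfl⟩ | ⟨x, tr', rfl, h'⟩
  · exact Or.inl ⟨rfl, rfl⟩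
  · rcases isTrace_ret h' with ⟨rfl, hr⟩
    exact Or.inr ⟨x, rfl, hr⟩

theorem isTrace_trigger_some {E : Type → Type} {X : Type} (e : E X) (x : X) :
    IsTrace (trigger e) [⟨X, e, x⟩] (some x) :=
  IsTrace.visStep e x (IsTrace.retEnd x)

end ITree

theorem isTrace_implOr {A : Type} {t u : ITree ImplE A} {etr r?}
    (h : ITree.IsTrace (implOr t u) etr r?) :
    (etr = [] ∧ r? = none) ∨
    (∃ tr', etr = ⟨Bool, ImplE.or, true⟩ :: tr' ∧ ITree.IsTrace t tr' r?) ∨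
    (∃ tr', etr = ⟨Bool, ImplE.or, false⟩ :: tr' ∧ ITree.IsTrace u tr' r?) := by
  rcases ITree.isTrace_vis h with ⟨rfl, rfl⟩ | ⟨x, tr', rfl, h'⟩
  · exact Or.inl ⟨rfl, rfl⟩
  · cases x
    · exact Or.inr (Or.inr ⟨tr', rfl, by simpa using h'⟩)
    · exact Or.inr (Or.inl ⟨tr', rfl, by simpa using h'⟩)

theorem isTrace_implChoose {A : Type} :
    ∀ (l : List A) {etr r?}, ITree.IsTrace (implChoose l) etr r? →
      implFlat etr = [] ∧ ∀ x, r? = some x → x ∈ l := by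
  intro l
  induction l with
  | nil =>
      intro etr r? h
      have h0 := ITree.isTrace_spin h rfl
      refine ⟨by simp [h0.1], fun x hx => ?_⟩
      rw [h0.2] at hx
      cases hx
  | cons y ys ih =>
      intro etr r? h
      rcases isTrace_implOr h with ⟨rfl, rfl⟩ | ⟨tr', rfl, h'⟩ | ⟨tr', rfl, h'⟩
      · exact ⟨rfl, by simp⟩
      · rcases ITree.isTrace_ret h' with ⟨rfl, hr⟩
        refine ⟨rfl, fun x hx => ?_⟩
        rcases hr with rfl | hr
        · cases hx
        · rw [hr] at hx
          cases hx
          exact List.mem_cons_self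
      · rcases ih h' with ⟨hflat, hmem⟩
        exact ⟨by simp [hflat], fun x hx => List.mem_cons_of_mem y (hmem x hx)⟩

theorem recv_bytes_inv {c : ConnectionId} :
    ∀ (n : ℕ) {etr r?}, ITree.IsTrace (recv_bytes c n) etr r? →
      ∃ bs : List Byte, implFlat etr = bs.map (NetworkEvent.ToServer c) ∧ bs.length ≤ n ∧
        ∀ v, r? = some v → v = bs ∧ bs.length = n := by
  intro n
  induction n with
  | zero =>
      intro etr r? h
      simp only [recv_bytes] at h
      rcases ITree.isTrace_ret h with ⟨rfl, hr⟩
      refine ⟨[], by simp, by simp, fun v hv => ?_⟩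
      rcases hr with rfl | hr
      · cases hv
      · rw [hr] at hv
        cases hv
        exact ⟨rfl, rfl⟩
  | succ n ih =>
      intro etr r? h
      simp only [recv_bytes] at h
      rcases ITree.isTrace_bind_inv h _ rfl with ⟨h₁, rfl⟩ | ⟨tr₁, b, tr₂, rfl, h₁, h₂⟩
      · rcases ITree.isTrace_trigger h₁ with ⟨rfl, _⟩ | ⟨x, rfl, _⟩
        · exact ⟨[], by simp, by simp, by simp⟩
        · refine ⟨[x], ?_, by simp, by simp⟩
          simp [implFlat, implEventToNet]
      · rcases ITree.isTrace_trigger h₁ with ⟨_, hn⟩ | ⟨x, rfl, hx⟩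
        · cases hn
        · have hxb : x = b := by
            rcases hx with hx | hx
            · cases hx
            · exact (Option.some.inj hx).symm
          subst hxb
          rcases ITree.isTrace_bind_inv h₂ _ rfl with ⟨h₃, rfl⟩ | ⟨tr₃, bs, tr₄, rfl, h₃, h₄⟩
          · rcases ih h₃ with ⟨bs, hflat, hle, _⟩
            refine ⟨x :: bs, ?_, by simp; omega, by simp⟩
            simp [hflat]
          · rcases ih h₃ with ⟨bsr, hflat, hle, hsome⟩
            obtain ⟨hbs, hlenn⟩ := hsome bs rfl
            subst hbs
            rcases ITree.isTrace_ret h₄ with ⟨rfl, hr⟩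
            refine ⟨x :: bs, ?_, by simp [hlenn], fun v hv => ?_⟩
            · simp [hflat]
            · rcases hr with rfl | hr
              · cases hv
              · rw [hr] at hv
                cases hv
                exact ⟨rfl, by simp [hlenn]⟩

theorem send_bytes_inv {c : ConnectionId} :
    ∀ (bs : List Byte) {etr r?}, ITree.IsTrace (send_bytes c bs) etr r? →
      ∃ j, j ≤ bs.length ∧ implFlat etr = (bs.take j).map (NetworkEvent.FromServer c) ∧
        ∀ v : Unit, r? = some v → j = bs.length := by
  intro bs
  induction bs with
  | nil =>
      intro etr r? h
      simp only [send_bytes] at h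
      rcases ITree.isTrace_ret h with ⟨rfl, hr⟩
      exact ⟨0, by simp, by simp, fun v hv => by simp⟩
  | cons b rest ih =>
      intro etr r? h
      simp only [send_bytes] at h
      rcases ITree.isTrace_bind_inv h _ rfl with ⟨h₁, rfl⟩ | ⟨tr₁, u, tr₂, rfl, h₁, h₂⟩
      · rcases ITree.isTrace_trigger h₁ with ⟨rfl, _⟩ | ⟨x, rfl, _⟩
        · exact ⟨0, by simp, by simp, by simp⟩
        · refine ⟨1, by simp, ?_, by simp⟩
          simp
      · rcases ITree.isTrace_trigger h₁ with ⟨_, hn⟩ | ⟨x, rfl, _⟩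
        · cases hn
        · rcases ih h₂ with ⟨j, hj, hflat, hsome⟩
          refine ⟨j + 1, by simp; omega, ?_, fun v hv => by simp [hsome v hv]⟩
          simp only [List.take_succ_cons, List.map_cons]
          simp [hflat]

theorem opt_helper {α : Type _} {r? : Option α} {v : α} (hr : r? = none ∨ r? = some v) :
    ∀ w, r? = some w → v = w := by
  rcases hr with rfl | rfl
  · intro w h; cases h
  · intro w h; exact Option.some.inj h

theorem process_conn_recv_eq (conn : Connection) (m : Message)
    (hst : conn.state = ConnState.RECVING) :
    process_conn conn m =
      ITree.bind (implChoose (List.range (msgLen - conn.recvBuf.length + 1))) (fun n =>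
        ITree.bind (recv_bytes conn.conn_id n) (fun bs =>
          if h : (conn.recvBuf ++ bs).length = msgLen then
            ITree.ret (({ conn with
              state := ConnState.SENDING
              recvBuf := []
              sendBuf := m.1 }, ⟨conn.recvBuf ++ bs, h⟩) : Connection × Message)
          else ITree.ret ({ conn with recvBuf := conn.recvBuf ++ bs }, m))) := by
  unfold process_conn
  rw [hst]

theorem process_conn_send_eq (conn : Connection) (m : Message)
    (hst : conn.state = ConnState.SENDING) :
    process_conn conn m =
      ITree.bind (implChoose (List.range (conn.sendBuf.length + 1))) (fun n =>
        ITree.bind (send_bytes conn.conn_id (conn.sendBuf.take n)) (fun _ =>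
          if (conn.sendBuf.drop n).isEmpty then
            ITree.ret (({ conn with state := ConnState.RECVING, sendBuf := [] }, m) :
              Connection × Message)
          else ITree.ret ({ conn with sendBuf := conn.sendBuf.drop n }, m))) := by
  unfold process_conn
  rw [hst]

theorem process_recv_inv {conn : Connection} {m : Message} {etr r?}
    (hst : conn.state = ConnState.RECVING) (hlen : conn.recvBuf.length < msgLen)
    (h : ITree.IsTrace (process_conn conn m) etr r?) :
    ∃ bs : List Byte, implFlat etr = bs.map (NetworkEvent.ToServer conn.conn_id) ∧
      conn.recvBuf.length + bs.length ≤ msgLen ∧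
      ∀ v, r? = some v → v = recvUpd conn bs m := by
  rw [process_conn_recv_eq conn m hst] at h
  rcases ITree.isTrace_bind_inv h _ rfl with ⟨h₁, rfl⟩ | ⟨tr₁, n, tr₂, rfl, h₁, h₂⟩
  · rcases isTrace_implChoose _ h₁ with ⟨hflat, _⟩
    exact ⟨[], by simp [hflat], by simpa using hlen.le, by simp⟩
  · rcases isTrace_implChoose _ h₁ with ⟨hflat₁, hmemn⟩
    have hn : n ≤ msgLen - conn.recvBuf.length := by
      have := List.mem_range.1 (hmemn n rfl)
      omega
    rcases ITree.isTrace_bind_inv h₂ _ rfl with ⟨h₃, rfl⟩ | ⟨tr₃, bs, tr₄, rfl, h₃, h₄⟩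
    · rcases recv_bytes_inv _ h₃ with ⟨bs, hflat₃, hble, _⟩
      exact ⟨bs, by simp [hflat₁, hflat₃], by omega, by simp⟩
    · rcases recv_bytes_inv _ h₃ with ⟨bsr, hflat₃, hble, hsome⟩
      obtain ⟨hbs, hblen⟩ := hsome bs rfl
      subst hbs
      try simp only [] at h₄
      by_cases hc : (conn.recvBuf ++ bs).length = msgLen
      · rw [dif_pos hc] at h₄
        rcases ITree.isTrace_ret h₄ with ⟨rfl, hr⟩
        refine ⟨bs, by simp [hflat₁, hflat₃], by omega, fun v hv => ?_⟩
        rw [← opt_helper hr v hv]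
        unfold recvUpd
        rw [dif_pos hc]
      · rw [dif_neg hc] at h₄
        rcases ITree.isTrace_ret h₄ with ⟨rfl, hr⟩
        refine ⟨bs, by simp [hflat₁, hflat₃], by omega, fun v hv => ?_⟩
        rw [← opt_helper hr v hv]
        unfold recvUpd
        rw [dif_neg hc]

theorem process_send_inv {conn : Connection} {m : Message} {etr r?}
    (hst : conn.state = ConnState.SENDING)
    (h : ITree.IsTrace (process_conn conn m) etr r?) :
    ∃ n, implFlat etr = (conn.sendBuf.take n).map (NetworkEvent.FromServer conn.conn_id) ∧
      ∀ v, r? = some v → v = (sendUpd conn n, m) := by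
  rw [process_conn_send_eq conn m hst] at h
  rcases ITree.isTrace_bind_inv h _ rfl with ⟨h₁, rfl⟩ | ⟨tr₁, n, tr₂, rfl, h₁, h₂⟩
  · rcases isTrace_implChoose _ h₁ with ⟨hflat, _⟩
    exact ⟨0, by simp [hflat], by simp⟩
  · rcases isTrace_implChoose _ h₁ with ⟨hflat₁, _⟩
    rcases ITree.isTrace_bind_inv h₂ _ rfl with ⟨h₃, rfl⟩ | ⟨tr₃, u, tr₄, rfl, h₃, h₄⟩
    · rcases send_bytes_inv _ h₃ with ⟨j, hj, hflat₃, _⟩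
      refine ⟨min j n, ?_, by simp⟩
      simp [hflat₁, hflat₃, List.take_take]
    · rcases send_bytes_inv _ h₃ with ⟨j, hj, hflat₃, hsome⟩
      have hjl := hsome u rfl
      rw [hjl, List.take_length] at hflat₃
      try simp only [] at h₄
      by_cases hce : (conn.sendBuf.drop n).isEmpty
      · rw [if_pos hce] at h₄
        rcases ITree.isTrace_ret h₄ with ⟨rfl, hr⟩
        refine ⟨n, by simp [hflat₁, hflat₃], fun v hv => ?_⟩
        rw [← opt_helper hr v hv]
        unfold sendUpd
        rw [if_pos hce]
      · rw [if_neg hce] at h₄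
        rcases ITree.isTrace_ret h₄ with ⟨rfl, hr⟩
        refine ⟨n, by simp [hflat₁, hflat₃], fun v hv => ?_⟩
        rw [← opt_helper hr v hv]
        unfold sendUpd
        rw [if_neg hce]

theorem msteps_recv_block {σ : ServerSt} {conn : Connection} {bs : List Byte}
    (hmem : conn ∈ σ.1) (hst : conn.state = ConnState.RECVING)
    (hlen : conn.recvBuf.length + bs.length ≤ msgLen) :
    MSteps σ (bs.map (NetworkEvent.ToServer conn.conn_id))
      (replace_when
        (fun x =>
          if has_conn_state ConnState.RECVING x || has_conn_state ConnState.SENDING x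
          then decide (x.conn_id = (recvUpd conn bs σ.2).1.conn_id) else false)
        (recvUpd conn bs σ.2).1 σ.1, (recvUpd conn bs σ.2).2) := by
  have hp : (fun x =>
      if has_conn_state ConnState.RECVING x || has_conn_state ConnState.SENDING x
      then decide (x.conn_id = (recvUpd conn bs σ.2).1.conn_id) else false) =
      pfor conn.conn_id := by
    funext x
    rw [recvUpd_conn_id]
    rfl
  rw [hp]
  exact recv_steps bs conn σ hmem hst hlen

theorem msteps_send_block {σ : ServerSt} {conn : Connection} {n : ℕ}
    (hmem : conn ∈ σ.1) (hst : conn.state = ConnState.SENDING) :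
    MSteps σ ((conn.sendBuf.take n).map (NetworkEvent.FromServer conn.conn_id))
      (replace_when
        (fun x =>
          if has_conn_state ConnState.RECVING x || has_conn_state ConnState.SENDING x
          then decide (x.conn_id = (sendUpd conn n).conn_id) else false)
        (sendUpd conn n) σ.1, σ.2) := by
  have hp : (fun x =>
      if has_conn_state ConnState.RECVING x || has_conn_state ConnState.SENDING x
      then decide (x.conn_id = (sendUpd conn n).conn_id) else false) =
      pfor conn.conn_id := by
    funext x
    rw [sendUpd_conn_id]
    rfl
  rw [hp]
  exact send_steps n conn σ hmem hst

theorem mem_choose_list {σl : List Connection} {c : Connection}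
    (h : c ∈ σl.filter (has_conn_state ConnState.RECVING) ++
      σl.filter (has_conn_state ConnState.SENDING)) :
    c ∈ σl ∧ (c.state = ConnState.RECVING ∨ c.state = ConnState.SENDING) := by
  rcases List.mem_append.1 h with h | h <;> obtain ⟨h1, h2⟩ := List.mem_filter.1 h
  · exact ⟨h1, Or.inl (by simpa [has_conn_state] using h2)⟩
  · exact ⟨h1, Or.inr (by simpa [has_conn_state] using h2)⟩

theorem body_inv {σ : ServerSt} (hwf : WF σ.1) {etr r?}
    (h : ITree.IsTrace (select_loop_body σ) etr r?) :
    ∃ σ'', MSteps σ (implFlat etr) σ'' ∧ ∀ σ', r? = some σ' → σ'' = σ' := by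
  rcases isTrace_implOr h with ⟨rfl, rfl⟩ | ⟨tr', rfl, hA⟩ | ⟨tr', rfl, hB⟩
  · exact ⟨σ, MSteps.nil σ, by simp⟩
  · -- accept branch
    rcases ITree.isTrace_bind_inv hA _ rfl with ⟨h₁, rfl⟩ | ⟨tr₁, rr, tr₂, rfl, h₁, h₂⟩
    · -- partial in accept_connection
      rcases ITree.isTrace_bind_inv h₁ _ rfl with ⟨h₃, _⟩ | ⟨tr₃, r, tr₄, rfl, h₃, h₄⟩
      · rcases ITree.isTrace_trigger h₃ with ⟨rfl, _⟩ | ⟨x, rfl, _⟩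
        · exact ⟨σ, by simpa using MSteps.nil σ, by simp⟩
        · cases x with
          | some c =>
              have hstep : SStep σ (NetworkEvent.NewConnection c)
                  ((⟨c, ConnState.RECVING, [], []⟩ : Connection) :: σ.1, σ.2) := rfl
              exact ⟨((⟨c, ConnState.RECVING, [], []⟩ : Connection) :: σ.1, σ.2),
                by simpa using MSteps.step hstep (MSteps.nil _), by simp⟩
          | none => exact ⟨σ, by simpa using MSteps.nil σ, by simp⟩
      · rcases ITree.isTrace_trigger h₃ with ⟨_, hn⟩ | ⟨x, rfl, hx⟩
        · cases hn
        · have hxr : x = r := by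
            rcases hx with hx | hx
            · cases hx
            · exact (Option.some.inj hx).symm
          subst hxr
          cases x with
          | some c =>
              try simp only [] at h₄
              rcases ITree.isTrace_ret h₄ with ⟨rfl, _⟩
              have hstep : SStep σ (NetworkEvent.NewConnection c)
                  ((⟨c, ConnState.RECVING, [], []⟩ : Connection) :: σ.1, σ.2) := rfl
              exact ⟨((⟨c, ConnState.RECVING, [], []⟩ : Connection) :: σ.1, σ.2),
                by simpa using MSteps.step hstep (MSteps.nil _), by simp⟩
          | none =>
              try simp only [] at h₄
              rcases ITree.isTrace_ret h₄ with ⟨rfl, _⟩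
              exact ⟨σ, by simpa using MSteps.nil σ, by simp⟩
    · -- accept_connection completed with rr
      rcases ITree.isTrace_bind_inv h₁ _ rfl with ⟨_, hn⟩ | ⟨tr₃, r, tr₄, rfl, h₃, h₄⟩
      · cases hn
      · rcases ITree.isTrace_trigger h₃ with ⟨_, hn⟩ | ⟨x, rfl, hx⟩
        · cases hn
        · have hxr : x = r := by
            rcases hx with hx | hx
            · cases hx
            · exact (Option.some.inj hx).symm
          subst hxr
          cases x with
          | some c =>
              try simp only [] at h₄
              rcases ITree.isTrace_ret h₄ with ⟨rfl, hr⟩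
              have hrr : rr = some (⟨c, ConnState.RECVING, [], []⟩ : Connection) :=
                (opt_helper hr rr rfl).symm
              subst hrr
              try simp only [] at h₂
              rcases ITree.isTrace_ret h₂ with ⟨rfl, hr₂⟩
              have hstep : SStep σ (NetworkEvent.NewConnection c)
                  ((⟨c, ConnState.RECVING, [], []⟩ : Connection) :: σ.1, σ.2) := rfl
              refine ⟨((⟨c, ConnState.RECVING, [], []⟩ : Connection) :: σ.1, σ.2),
                by simpa using MSteps.step hstep (MSteps.nil _),
                fun σ' hs => opt_helper hr₂ σ' hs⟩
          | none =>
              try simp only [] at h₄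
              rcases ITree.isTrace_ret h₄ with ⟨rfl, hr⟩
              have hrr : rr = none := (opt_helper hr rr rfl).symm
              subst hrr
              try simp only [] at h₂
              rcases ITree.isTrace_ret h₂ with ⟨rfl, hr₂⟩
              refine ⟨σ, by simpa using MSteps.nil σ, fun σ' hs => ?_⟩
              have := opt_helper hr₂ σ' hs
              simpa using this
  · -- service branch
    rcases ITree.isTrace_bind_inv hB _ rfl with ⟨h₁, rfl⟩ | ⟨tr₁, conn, tr₂, rfl, h₁, h₂⟩
    · rcases isTrace_implChoose _ h₁ with ⟨hflat, _⟩
      exact ⟨σ, by simpa [hflat] using MSteps.nil σ, by simp⟩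
    · rcases isTrace_implChoose _ h₁ with ⟨hflat₁, hmemc⟩
      obtain ⟨hmem, hstate⟩ := mem_choose_list (hmemc conn rfl)
      rcases ITree.isTrace_bind_inv h₂ _ rfl with ⟨h₃, rfl⟩ | ⟨tr₃, v, tr₄, rfl, h₃, h₄⟩
      · rcases hstate with hst | hst
        · rcases process_recv_inv hst ((hwf conn hmem).1 hst).1 h₃ with ⟨bs, hflat₃, hlen, _⟩
          exact ⟨_, by simpa [hflat₁, hflat₃] using recv_steps bs conn σ hmem hst hlen,
            by simp⟩
        · rcases process_send_inv hst h₃ with ⟨n, hflat₃, _⟩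
          exact ⟨_, by simpa [hflat₁, hflat₃] using send_steps n conn σ hmem hst, by simp⟩
      · try simp only [] at h₄
        rcases hstate with hst | hst
        · rcases process_recv_inv hst ((hwf conn hmem).1 hst).1 h₃ with ⟨bs, hflat₃, hlen, hv⟩
          have hvv := hv v rfl
          subst hvv
          rcases ITree.isTrace_ret h₄ with ⟨rfl, hr⟩
          refine ⟨_, ?_, fun σ' hs => opt_helper hr σ' hs⟩
          simpa [hflat₁, hflat₃] using msteps_recv_block hmem hst hlen
        · rcases process_send_inv hst h₃ with ⟨n, hflat₃, hv⟩
          have hvv := hv v rfl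
          subst hvv
          rcases ITree.isTrace_ret h₄ with ⟨rfl, hr⟩
          refine ⟨_, ?_, fun σ' hs => opt_helper hr σ' hs⟩
          simpa [hflat₁, hflat₃] using msteps_send_block hmem hst

theorem loopT_msteps :
    ∀ {u etr}, ITree.LoopT select_loop_body u etr →
      ∀ σ : ServerSt, u = select_loop_body σ → WF σ.1 →
        ∃ σ'', MSteps σ (implFlat etr) σ'' := by
  intro u etr h
  induction h with
  | pre h' =>
      intro σ hu hwf
      rcases body_inv hwf (hu ▸ h') with ⟨σ'', hs, _⟩
      exact ⟨σ'', hs⟩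
  | more h₁ h₂ ih =>
      intro σ hu hwf
      rcases body_inv hwf (hu ▸ h₁) with ⟨σ'', hs, hsome⟩
      have hss := hsome _ rfl
      subst hss
      have hwf' := WF_MSteps hwf hs
      rcases ih _ rfl hwf' with ⟨σf, hs₂⟩
      exact ⟨σf, by simpa using MSteps.append hs hs₂⟩

theorem impl_msteps {etr : List (ITree.EventE ImplE)} {r?}
    (h : ITree.IsTrace impl_model etr r?) :
    ∃ σ'', MSteps ([], zeros) (implFlat etr) σ'' := by
  have h' := ITree.isTrace_loop_inv
    (show ITree.IsTrace (ITree.loop select_loop_body ([], zeros)) etr r? from h)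
  exact loopT_msteps h'.2 ([], zeros) rfl (fun c hc => absurd hc List.not_mem_nil)

/-! ## The specification-side machine -/

@[simp] theorem specEventToNet_or (b : Bool) :
    specEventToNet ⟨Bool, SpecE.or, b⟩ = [] := rfl

@[simp] theorem specEventToNet_connect (c : ConnectionId) :
    specEventToNet ⟨ConnectionId, SpecE.obs_connect, c⟩ = [NetworkEvent.NewConnection c] := rfl

@[simp] theorem specEventToNet_to (c : ConnectionId) (msg : Message) :
    specEventToNet ⟨Message, SpecE.obs_msg_to_server c, msg⟩ =
      msg.1.map (NetworkEvent.ToServer c) := rfl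

@[simp] theorem specEventToNet_from (c : ConnectionId) (m : Message) (u : Unit) :
    specEventToNet ⟨Unit, SpecE.obs_msg_from_server c m, u⟩ =
      m.1.map (NetworkEvent.FromServer c) := rfl

theorem specOr_def {A : Type} (t u : ITree SpecE A) :
    specOr t u = ITree.vis SpecE.or (fun b => if b then t else u) := rfl

theorem specChoose_cons {A : Type} (x : A) (xs : List A) :
    specChoose (x :: xs) = specOr (ITree.ret x) (specChoose xs) := rfl

theorem specStep_def (conns : List ConnectionId) (m : Message) :
    specStep (conns, m) = specOr
      (ITree.bind (ITree.trigger SpecE.obs_connect) fun c =>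
        ITree.ret (c :: conns, m))
      (ITree.bind (specChoose conns) fun c =>
        ITree.bind (ITree.trigger (SpecE.obs_msg_to_server c)) fun msg =>
          ITree.bind (ITree.trigger (SpecE.obs_msg_from_server c m)) fun _ =>
            ITree.ret (conns, msg)) := rfl

/-- Runs of the linear specification, as network traces. -/
inductive SpecRun : List ConnectionId → Message → NetworkTrace → Prop
  | nil (conns : List ConnectionId) (m : Message) : SpecRun conns m []
  | connect {conns m ds} (c : ConnectionId) :
      SpecRun (c :: conns) m ds → SpecRun conns m (NetworkEvent.NewConnection c :: ds)
  | exch {conns m ds} (c : ConnectionId) (msg : Message) (hc : c ∈ conns) :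
      SpecRun conns msg ds →
      SpecRun conns m (msg.1.map (NetworkEvent.ToServer c) ++
        (m.1.map (NetworkEvent.FromServer c) ++ ds))

theorem specChoose_trace {c : ConnectionId} :
    ∀ {conns : List ConnectionId}, c ∈ conns →
      ∃ etr, ITree.IsTrace (specChoose conns) etr (some c) ∧ specFlat etr = [] := by
  intro conns h
  induction conns with
  | nil => cases h
  | cons y ys ih =>
      rcases List.mem_cons.1 h with rfl | h'
      · refine ⟨[⟨Bool, SpecE.or, true⟩], ?_, rfl⟩
        rw [specChoose_cons, specOr_def]
        apply ITree.IsTrace.visStep SpecE.or true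
        simpa using ITree.IsTrace.retEnd c
      · rcases ih h' with ⟨etr, htr, hf⟩
        refine ⟨⟨Bool, SpecE.or, false⟩ :: etr, ?_, by simpa using hf⟩
        rw [specChoose_cons, specOr_def]
        apply ITree.IsTrace.visStep SpecE.or false
        simpa using htr

theorem specStep_trace_connect (conns : List ConnectionId) (m : Message) (c : ConnectionId) :
    ITree.IsTrace (specStep (conns, m))
      [⟨Bool, SpecE.or, true⟩, ⟨ConnectionId, SpecE.obs_connect, c⟩]
      (some (c :: conns, m)) := by
  rw [specStep_def, specOr_def]
  apply ITree.IsTrace.visStep SpecE.or true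
  simpa using ITree.isTrace_bind_some (ITree.isTrace_trigger_some SpecE.obs_connect c) rfl
    (ITree.IsTrace.retEnd ((c :: conns, m) : List ConnectionId × Message))

theorem specStep_trace_exch (conns : List ConnectionId) (m : Message) (c : ConnectionId)
    (msg : Message) (hc : c ∈ conns) :
    ∃ etr, ITree.IsTrace (specStep (conns, m)) etr (some (conns, msg)) ∧
      specFlat etr = msg.1.map (NetworkEvent.ToServer c) ++
        m.1.map (NetworkEvent.FromServer c) := by
  obtain ⟨etr₀, h₀, hf₀⟩ := specChoose_trace hc
  refine ⟨⟨Bool, SpecE.or, false⟩ ::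
    (etr₀ ++ [⟨Message, SpecE.obs_msg_to_server c, msg⟩,
      ⟨Unit, SpecE.obs_msg_from_server c m, ()⟩]), ?_, ?_⟩
  · rw [specStep_def, specOr_def]
    apply ITree.IsTrace.visStep SpecE.or false
    have hinner : ITree.IsTrace
        (ITree.bind (ITree.trigger (SpecE.obs_msg_to_server c)) fun msg =>
          ITree.bind (ITree.trigger (SpecE.obs_msg_from_server c m)) fun _ =>
            ITree.ret (conns, msg))
        [⟨Message, SpecE.obs_msg_to_server c, msg⟩,
          ⟨Unit, SpecE.obs_msg_from_server c m, ()⟩] (some (conns, msg)) := by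
      exact ITree.isTrace_bind_some (ITree.isTrace_trigger_some _ msg) rfl
        (ITree.isTrace_bind_some (ITree.isTrace_trigger_some _ ()) rfl
          (ITree.IsTrace.retEnd ((conns, msg) : List ConnectionId × Message)))
    simpa using ITree.isTrace_bind_some h₀ rfl hinner
  · simp [hf₀]

theorem specRun_isTrace :
    ∀ {conns m ds}, SpecRun conns m ds →
      ∃ etr, ITree.IsTrace (linear_spec' conns m) etr none ∧ specFlat etr = ds := by
  intro conns m ds h
  induction h with
  | nil conns m => exact ⟨[], ITree.IsTrace.nil _, rfl⟩
  | connect c h ih =>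
      rcases ih with ⟨etr, htr, hf⟩
      refine ⟨[⟨Bool, SpecE.or, true⟩, ⟨ConnectionId, SpecE.obs_connect, c⟩] ++ etr, ?_, ?_⟩
      · show ITree.IsTrace (ITree.loop specStep _) _ _
        rw [ITree.loop_def]
        exact ITree.isTrace_loopAux_some (specStep_trace_connect _ _ c) rfl
          (by rw [← ITree.loop_def]; exact htr)
      · simp [hf]
  | exch c msg hc h ih =>
      rcases ih with ⟨etr, htr, hf⟩
      obtain ⟨etr₁, htr₁, hf₁⟩ := specStep_trace_exch _ _ c msg hc
      refine ⟨etr₁ ++ etr, ?_, ?_⟩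
      · show ITree.IsTrace (ITree.loop specStep _) _ _
        rw [ITree.loop_def]
        exact ITree.isTrace_loopAux_some htr₁ rfl
          (by rw [← ITree.loop_def]; exact htr)
      · simp [hf, hf₁]

theorem specRun_is_spec_trace {ds : NetworkTrace} (h : SpecRun [] zeros ds) :
    is_spec_trace linear_spec ds := by
  rcases specRun_isTrace h with ⟨etr, htr, hf⟩
  exact ⟨etr, none, htr, hf.symm⟩

/-! ## Simulation infrastructure -/

/-- Find the connection structure with the given id. -/
def connOf (l : List Connection) (cid : ConnectionId) : Option Connection :=
  l.find? (fun x => decide (x.conn_id = cid))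

/-- Bytes received but not yet reported to the specification. -/
def rbufL (l : List Connection) (cid : ConnectionId) : List Byte :=
  ((connOf l cid).map Connection.recvBuf).getD []

/-- Bytes reported to the specification but not yet sent. -/
def sbufL (l : List Connection) (cid : ConnectionId) : List Byte :=
  ((connOf l cid).map Connection.sendBuf).getD []

theorem connOf_not_mem {l : List Connection} {cid : ConnectionId}
    (h : cid ∉ l.map Connection.conn_id) : connOf l cid = none := by
  apply List.find?_eq_none.2
  intro x hx
  simp only [decide_eq_true_eq]
  intro h'
  exact h (List.mem_map.2 ⟨x, hx, h'⟩)

theorem connOf_cons_eq {x : Connection} {l : List Connection} {cid : ConnectionId}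
    (hc : x.conn_id = cid) : connOf (x :: l) cid = some x :=
  List.find?_cons_of_pos (by simp [hc])

theorem connOf_cons_ne {x : Connection} {l : List Connection} {cid : ConnectionId}
    (hc : ¬ x.conn_id = cid) : connOf (x :: l) cid = connOf l cid :=
  List.find?_cons_of_neg (by simp [hc])

theorem connOf_nodup_mem : ∀ {l : List Connection} {conn : Connection},
    (l.map Connection.conn_id).Nodup → conn ∈ l →
    connOf l conn.conn_id = some conn := by
  intro l
  induction l with
  | nil => intro conn _ h; cases h
  | cons x xs ih =>
      intro conn hnd hmem
      rcases List.mem_cons.1 hmem with rfl | hmem'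
      · exact connOf_cons_eq rfl
      · have hx : ¬ x.conn_id = conn.conn_id := by
          intro h
          have := (List.nodup_cons.1 hnd).1
          exact this (h ▸ List.mem_map.2 ⟨conn, hmem', rfl⟩)
        rw [connOf_cons_ne hx]
        exact ih (List.nodup_cons.1 hnd).2 hmem'

theorem replace_when_cons (p : Connection → Bool) (c' x : Connection) (l : List Connection) :
    replace_when p c' (x :: l) = (if p x then c' else x) :: replace_when p c' l := rfl

theorem connOf_replace_eq : ∀ {l : List Connection} {conn conn' : Connection},
    conn ∈ l →
    (∀ x ∈ l, x.state = ConnState.RECVING ∨ x.state = ConnState.SENDING) →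
    conn'.conn_id = conn.conn_id →
    connOf (replace_when (pfor conn.conn_id) conn' l) conn.conn_id = some conn' := by
  intro l
  induction l with
  | nil => intro conn conn' h _ _; cases h
  | cons x xs ih =>
      intro conn conn' hmem hRS hid
      rw [replace_when_cons]
      by_cases hx : x.conn_id = conn.conn_id
      · have hpx : pfor conn.conn_id x = true := pfor_true hx (hRS x (List.mem_cons_self))
        rw [if_pos hpx]
        exact connOf_cons_eq hid
      · have hpx : pfor conn.conn_id x = false := by
          by_cases hrs : has_conn_state ConnState.RECVING x || has_conn_state ConnState.SENDING x
          · simp [pfor, hrs, hx]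
          · simp [pfor, hrs]
        rw [if_neg (by simp [hpx])]
        have hmem' : conn ∈ xs := by
          rcases List.mem_cons.1 hmem with rfl | h'
          · exact absurd rfl hx
          · exact h'
        rw [connOf_cons_ne hx]
        exact ih hmem' (fun y hy => hRS y (List.mem_cons_of_mem x hy)) hid

theorem connOf_replace_ne : ∀ {l : List Connection} {conn' : Connection} {cid cid' : ConnectionId},
    conn'.conn_id = cid' → cid ≠ cid' →
    connOf (replace_when (pfor cid') conn' l) cid = connOf l cid := by
  intro l
  induction l with
  | nil => intro conn' cid cid' _ _; rfl
  | cons x xs ih =>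
      intro conn' cid cid' hid hne
      rw [replace_when_cons]
      by_cases hpx : pfor cid' x
      · rw [if_pos hpx]
        have hxid : x.conn_id = cid' := pfor_id hpx
        have h1 : ¬ conn'.conn_id = cid := by rw [hid]; exact fun h => hne h.symm
        have h2 : ¬ x.conn_id = cid := by rw [hxid]; exact fun h => hne h.symm
        rw [connOf_cons_ne h1, connOf_cons_ne h2]
        exact ih hid hne
      · rw [if_neg hpx]
        by_cases hx : x.conn_id = cid
        · rw [connOf_cons_eq hx, connOf_cons_eq hx]
        · rw [connOf_cons_ne hx, connOf_cons_ne hx]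
          exact ih hid hne

theorem updateNs_eq (ns : NetworkState) (c : ConnectionId) (v : ConnectionNetState) :
    updateNs ns c v c = v := by simp [updateNs]

theorem updateNs_ne {ns : NetworkState} {c c' : ConnectionId} {v : ConnectionNetState}
    (h : c' ≠ c) : updateNs ns c v c' = ns c' := by simp [updateNs, h]

theorem updateNs_updateNs (ns : NetworkState) (c : ConnectionId)
    (v w : ConnectionNetState) : updateNs (updateNs ns c v) c w = updateNs ns c w := by
  funext x
  by_cases hx : x = c <;> simp [updateNs, hx]

theorem updateNs_self (ns : NetworkState) (c : ConnectionId) :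
    updateNs ns c (ns c) = ns := by
  funext x
  by_cases hx : x = c <;> simp [updateNs, hx]

theorem ts_consume (c : ConnectionId) : ∀ (bs : List Byte) (rest : List Byte) (ns : NetworkState),
    ((ns c).status = ConnectionStatus.PENDING ∨ (ns c).status = ConnectionStatus.ACCEPTED) →
    (ns c).toServer = bs ++ rest →
    server_transitions (bs.map (NetworkEvent.ToServer c)) ns
      (updateNs ns c { ns c with toServer := rest }) := by
  intro bs
  induction bs with
  | nil =>
      intro rest ns _ hto
      simp only [List.nil_append] at hto
      have h1 : ({ ns c with toServer := rest } : ConnectionNetState) = ns c := by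
        rw [← hto]
      rw [h1, updateNs_self]
      exact server_transitions.nil ns
  | cons b bs ih =>
      intro rest ns hst hto
      refine server_transitions.cons (ns' := updateNs ns c { ns c with toServer := bs ++ rest })
        ⟨hst, bs ++ rest, by rw [hto]; rfl, rfl⟩ ?_
      have h2 := ih rest (updateNs ns c { ns c with toServer := bs ++ rest })
        (by rw [updateNs_eq]; exact hst) (by rw [updateNs_eq])
      simp only [updateNs_eq, updateNs_updateNs] at h2
      exact h2

theorem fs_produce (c : ConnectionId) : ∀ (bs : List Byte) (ns : NetworkState),
    (ns c).status = ConnectionStatus.ACCEPTED →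
    server_transitions (bs.map (NetworkEvent.FromServer c)) ns
      (updateNs ns c { ns c with fromServer := (ns c).fromServer ++ bs }) := by
  intro bs
  induction bs with
  | nil =>
      intro ns _
      have h1 : ({ ns c with fromServer := (ns c).fromServer ++ [] } : ConnectionNetState)
          = ns c := by simp
      rw [h1, updateNs_self]
      exact server_transitions.nil ns
  | cons b bs ih =>
      intro ns hst
      refine server_transitions.cons
        (ns' := updateNs ns c { ns c with fromServer := (ns c).fromServer ++ [b] })
        ⟨hst, rfl⟩ ?_
      have h2 := ih (updateNs ns c { ns c with fromServer := (ns c).fromServer ++ [b] })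
        (by rw [updateNs_eq]; exact hst)
      simp only [updateNs_eq, updateNs_updateNs, List.append_assoc, List.singleton_append] at h2
      exact h2

theorem reorder_prepend : ∀ {evs : NetworkTrace} {ns ns₁ : NetworkState} {ds tc : NetworkTrace},
    server_transitions evs ns ns₁ → network_reordered_ ns₁ ds tc →
    network_reordered_ ns (evs ++ ds) tc := by
  intro evs ns ns₁ ds tc h
  induction h with
  | nil => exact fun h' => h'
  | cons h1 _ ih => exact fun h' => network_reordered_.server h1 (ih h')

/-- The simulation invariant. -/
def INV (σ : ServerSt) (ns_t ns_d : NetworkState) (sconns : List ConnectionId) : Prop :=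
  (∀ cid, (ns_d cid).status = (ns_t cid).status) ∧
  (∀ cid, (ns_d cid).toServer = rbufL σ.1 cid ++ (ns_t cid).toServer) ∧
  (∀ cid, (ns_d cid).fromServer = (ns_t cid).fromServer ++ sbufL σ.1 cid) ∧
  (∀ conn ∈ σ.1, conn.conn_id ∈ sconns ∧
    (ns_t conn.conn_id).status = ConnectionStatus.ACCEPTED ∧ WFconn conn ∧
    (conn.state = ConnState.RECVING ∨ conn.state = ConnState.SENDING)) ∧
  (σ.1.map Connection.conn_id).Nodup

theorem replace_when_id {l : List Connection} {conn : Connection}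
    (hnd : (l.map Connection.conn_id).Nodup) (hmem : conn ∈ l) :
    replace_when (pfor conn.conn_id) conn l = l := by
  have hinj := List.inj_on_of_nodup_map hnd
  apply List.map_congr_left ?_ |>.trans (List.map_id l)
  intro x hx
  by_cases hp : pfor conn.conn_id x
  · have hxc : x = conn := hinj hx hmem (pfor_id hp)
    simp [hp, hxc]
  · simp [hp]

theorem estep_id {σ σ' : ServerSt}
    (hwf : ∀ conn ∈ σ.1, WFconn conn)
    (hnd : (σ.1.map Connection.conn_id).Nodup)
    (h : EStep σ σ') : σ' = σ := by
  rcases h with ⟨conn, hmem, hst, rfl⟩ | ⟨conn, hmem, hst, rfl⟩ | rfl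
  · have hlen : conn.recvBuf.length < msgLen := ((hwf conn hmem).1 hst).1
    have hcond : ¬ (conn.recvBuf ++ ([] : List Byte)).length = msgLen := by
      simpa using Nat.ne_of_lt hlen
    have h1 : recvUpd conn [] σ.2 = (conn, σ.2) := by
      unfold recvUpd
      rw [dif_neg hcond]
      have : ({ conn with recvBuf := conn.recvBuf ++ [] } : Connection) = conn := by
        cases conn; simp
      rw [this]
    rw [h1]
    simp only
    rw [replace_when_id hnd hmem]
  · have hne : conn.sendBuf ≠ [] := ((hwf conn hmem).2 hst).2
    have h1 : sendUpd conn 0 = conn := by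
      unfold sendUpd
      rw [if_neg (by simpa [List.isEmpty_iff] using hne)]
      cases conn; simp
    rw [h1, replace_when_id hnd hmem]
  · rfl

theorem msteps_cons {σ σe : ServerSt} {ev : NetworkEvent} {ts : NetworkTrace}
    (hwf : ∀ conn ∈ σ.1, WFconn conn)
    (hnd : (σ.1.map Connection.conn_id).Nodup)
    (h : MSteps σ (ev :: ts) σe) :
    ∃ σ₂, SStep σ ev σ₂ ∧ MSteps σ₂ ts σe := by
  generalize hts : ev :: ts = l at h
  induction h with
  | nil => cases hts
  | eps he hrest ih =>
      have heq := estep_id hwf hnd he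
      subst heq
      exact ih hwf hnd hts
  | step hs hrest ih =>
      cases hts
      exact ⟨_, hs, hrest⟩

theorem rbufL_some {l : List Connection} {cid : ConnectionId} {conn : Connection}
    (h : connOf l cid = some conn) : rbufL l cid = conn.recvBuf := by
  unfold rbufL; rw [h]; rfl

theorem rbufL_none {l : List Connection} {cid : ConnectionId}
    (h : connOf l cid = none) : rbufL l cid = [] := by
  unfold rbufL; rw [h]; rfl

theorem sbufL_some {l : List Connection} {cid : ConnectionId} {conn : Connection}
    (h : connOf l cid = some conn) : sbufL l cid = conn.sendBuf := by
  unfold sbufL; rw [h]; rfl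

theorem sbufL_none {l : List Connection} {cid : ConnectionId}
    (h : connOf l cid = none) : sbufL l cid = [] := by
  unfold sbufL; rw [h]; rfl

theorem main_sim :
    ∀ {ns_t : NetworkState} {ts tc : NetworkTrace}, network_reordered_ ns_t ts tc →
      ∀ {σ σe : ServerSt} {ns_d : NetworkState} {sconns : List ConnectionId},
        MSteps σ ts σe → INV σ ns_t ns_d sconns →
        ∃ ds, SpecRun sconns σ.2 ds ∧ network_reordered_ ns_d ds tc := by
  intro ns_t ts tc h
  induction h with
  | nil ns =>
      intro σ σe ns_d sconns _ _
      exact ⟨[], SpecRun.nil _ _, network_reordered_.nil _⟩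
  | @client ns ns' ev ts tc hcl hrest ih =>
      intro σ σe ns_d sconns hms hinv
      obtain ⟨hstat, hto, hfrom, hconns, hnd⟩ := hinv
      cases ev with
      | NewConnection c =>
          obtain ⟨hcs, rfl⟩ := hcl
          have hinv' : INV σ (updateNs ns c { ns c with status := ConnectionStatus.PENDING })
              (updateNs ns_d c { ns_d c with status := ConnectionStatus.PENDING }) sconns := by
            refine ⟨?_, ?_, ?_, ?_, hnd⟩
            · intro cid; by_cases hc : cid = c
              · rw [hc, updateNs_eq, updateNs_eq]
              · rw [updateNs_ne hc, updateNs_ne hc]; exact hstat cid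
            · intro cid; by_cases hc : cid = c
              · rw [hc, updateNs_eq, updateNs_eq]; exact hto c
              · rw [updateNs_ne hc, updateNs_ne hc]; exact hto cid
            · intro cid; by_cases hc : cid = c
              · rw [hc, updateNs_eq, updateNs_eq]; exact hfrom c
              · rw [updateNs_ne hc, updateNs_ne hc]; exact hfrom cid
            · intro conn hc2
              obtain ⟨h1, h2, h3, h4⟩ := hconns conn hc2
              refine ⟨h1, ?_, h3, h4⟩
              by_cases hcc : conn.conn_id = c
              · rw [hcc] at h2; rw [hcs] at h2; exact ConnectionStatus.noConfusion h2
              · rw [updateNs_ne hcc]; exact h2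
          have hcld : client_transition (NetworkEvent.NewConnection c) ns_d
              (updateNs ns_d c { ns_d c with status := ConnectionStatus.PENDING }) :=
            ⟨(hstat c).trans hcs, rfl⟩
          obtain ⟨ds, hds, hrd⟩ := ih hms hinv'
          exact ⟨ds, hds, network_reordered_.client hcld hrd⟩
      | ToServer c b =>
          obtain ⟨hcs, rfl⟩ := hcl
          have hinv' : INV σ
              (updateNs ns c { ns c with toServer := (ns c).toServer ++ [b] })
              (updateNs ns_d c { ns_d c with toServer := (ns_d c).toServer ++ [b] }) sconns := by
            refine ⟨?_, ?_, ?_, ?_, hnd⟩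
            · intro cid; by_cases hc : cid = c
              · rw [hc, updateNs_eq, updateNs_eq]; exact hstat c
              · rw [updateNs_ne hc, updateNs_ne hc]; exact hstat cid
            · intro cid; by_cases hc : cid = c
              · rw [hc, updateNs_eq, updateNs_eq]
                show (ns_d c).toServer ++ [b] = rbufL σ.1 c ++ ((ns c).toServer ++ [b])
                rw [hto c, List.append_assoc]
              · rw [updateNs_ne hc, updateNs_ne hc]; exact hto cid
            · intro cid; by_cases hc : cid = c
              · rw [hc, updateNs_eq, updateNs_eq]; exact hfrom c
              · rw [updateNs_ne hc, updateNs_ne hc]; exact hfrom cid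
            · intro conn hc2
              obtain ⟨h1, h2, h3, h4⟩ := hconns conn hc2
              refine ⟨h1, ?_, h3, h4⟩
              by_cases hcc : conn.conn_id = c
              · rw [hcc, updateNs_eq]; rw [hcc] at h2; exact h2
              · rw [updateNs_ne hcc]; exact h2
          have hcld : client_transition (NetworkEvent.ToServer c b) ns_d
              (updateNs ns_d c { ns_d c with toServer := (ns_d c).toServer ++ [b] }) :=
            ⟨by rw [hstat c]; exact hcs, rfl⟩
          obtain ⟨ds, hds, hrd⟩ := ih hms hinv'
          exact ⟨ds, hds, network_reordered_.client hcld hrd⟩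
      | FromServer c b =>
          obtain ⟨hcs, rest, hhead, rfl⟩ := hcl
          have hdc : (ns_d c).fromServer = b :: (rest ++ sbufL σ.1 c) := by
            rw [hfrom c, hhead]; rfl
          have hinv' : INV σ
              (updateNs ns c { ns c with fromServer := rest })
              (updateNs ns_d c { ns_d c with fromServer := rest ++ sbufL σ.1 c }) sconns := by
            refine ⟨?_, ?_, ?_, ?_, hnd⟩
            · intro cid; by_cases hc : cid = c
              · rw [hc, updateNs_eq, updateNs_eq]; exact hstat c
              · rw [updateNs_ne hc, updateNs_ne hc]; exact hstat cid
            · intro cid; by_cases hc : cid = c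
              · rw [hc, updateNs_eq, updateNs_eq]; exact hto c
              · rw [updateNs_ne hc, updateNs_ne hc]; exact hto cid
            · intro cid; by_cases hc : cid = c
              · rw [hc, updateNs_eq, updateNs_eq]
              · rw [updateNs_ne hc, updateNs_ne hc]; exact hfrom cid
            · intro conn hc2
              obtain ⟨h1, h2, h3, h4⟩ := hconns conn hc2
              refine ⟨h1, ?_, h3, h4⟩
              by_cases hcc : conn.conn_id = c
              · rw [hcc, updateNs_eq]; rw [hcc] at h2; exact h2
              · rw [updateNs_ne hcc]; exact h2
          have hcld : client_transition (NetworkEvent.FromServer c b) ns_d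
              (updateNs ns_d c { ns_d c with fromServer := rest ++ sbufL σ.1 c }) :=
            ⟨by rw [hstat c]; exact hcs, rest ++ sbufL σ.1 c, hdc, rfl⟩
          obtain ⟨ds, hds, hrd⟩ := ih hms hinv'
          exact ⟨ds, hds, network_reordered_.client hcld hrd⟩
  | @server ns ns' ev ts tc hsv hrest ih =>
      intro σ σe ns_d sconns hms hinv
      obtain ⟨hstat, hto, hfrom, hconns, hnd⟩ := hinv
      obtain ⟨σ₂, hstep, hms₂⟩ :=
        msteps_cons (fun conn hc => (hconns conn hc).2.2.1) hnd hms
      cases ev with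
      | NewConnection c =>
          obtain ⟨hps, rfl⟩ := hsv
          have hstep' : σ₂ = ((⟨c, ConnState.RECVING, [], []⟩ : Connection) :: σ.1, σ.2) := hstep
          subst hstep'
          have hfresh : c ∉ σ.1.map Connection.conn_id := by
            intro hmem
            obtain ⟨conn, hc2, hcid⟩ := List.mem_map.1 hmem
            have h2 := (hconns conn hc2).2.1
            rw [hcid, hps] at h2
            exact ConnectionStatus.noConfusion h2
          have hsvd : server_transition (NetworkEvent.NewConnection c) ns_d
              (updateNs ns_d c { ns_d c with status := ConnectionStatus.ACCEPTED }) :=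
            ⟨(hstat c).trans hps, rfl⟩
          have hcOfe : connOf ((⟨c, ConnState.RECVING, [], []⟩ : Connection) :: σ.1) c =
              some (⟨c, ConnState.RECVING, [], []⟩ : Connection) := connOf_cons_eq rfl
          have hinv' : INV ((⟨c, ConnState.RECVING, [], []⟩ : Connection) :: σ.1, σ.2)
              (updateNs ns c { ns c with status := ConnectionStatus.ACCEPTED })
              (updateNs ns_d c { ns_d c with status := ConnectionStatus.ACCEPTED })
              (c :: sconns) := by
            refine ⟨?_, ?_, ?_, ?_, ?_⟩
            · intro cid; by_cases hc : cid = c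
              · rw [hc, updateNs_eq, updateNs_eq]
              · rw [updateNs_ne hc, updateNs_ne hc]; exact hstat cid
            · intro cid; by_cases hc : cid = c
              · rw [hc, updateNs_eq, updateNs_eq]
                show (ns_d c).toServer =
                  rbufL ((⟨c, ConnState.RECVING, [], []⟩ : Connection) :: σ.1) c ++
                    (ns c).toServer
                rw [rbufL_some hcOfe]
                have h5 := hto c
                rw [rbufL_none (connOf_not_mem hfresh)] at h5
                simpa using h5
              · rw [updateNs_ne hc, updateNs_ne hc]
                show (ns_d cid).toServer =
                  rbufL ((⟨c, ConnState.RECVING, [], []⟩ : Connection) :: σ.1) cid ++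
                    (ns cid).toServer
                rw [rbufL, connOf_cons_ne (fun h => hc h.symm)]
                exact hto cid
            · intro cid; by_cases hc : cid = c
              · rw [hc, updateNs_eq, updateNs_eq]
                show (ns_d c).fromServer = (ns c).fromServer ++
                  sbufL ((⟨c, ConnState.RECVING, [], []⟩ : Connection) :: σ.1) c
                rw [sbufL_some hcOfe]
                have h5 := hfrom c
                rw [sbufL_none (connOf_not_mem hfresh)] at h5
                simpa using h5
              · rw [updateNs_ne hc, updateNs_ne hc]
                show (ns_d cid).fromServer = (ns cid).fromServer ++
                  sbufL ((⟨c, ConnState.RECVING, [], []⟩ : Connection) :: σ.1) cid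
                rw [sbufL, connOf_cons_ne (fun h => hc h.symm)]
                exact hfrom cid
            · intro conn hc2
              rcases List.mem_cons.1 hc2 with rfl | hc3
              · refine ⟨List.mem_cons_self, by rw [updateNs_eq], ?_, Or.inl rfl⟩
                exact ⟨fun _ => ⟨by simpa using msgLen_pos, rfl⟩,
                  fun h => ConnState.noConfusion h⟩
              · obtain ⟨h1, h2, h3, h4⟩ := hconns conn hc3
                refine ⟨List.mem_cons_of_mem _ h1, ?_, h3, h4⟩
                by_cases hcc : conn.conn_id = c
                · exact absurd (hcc ▸ List.mem_map.2 ⟨conn, hc3, rfl⟩) hfresh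
                · rw [updateNs_ne hcc]; exact h2
            · rw [List.map_cons]
              exact List.nodup_cons.2 ⟨hfresh, hnd⟩
          obtain ⟨ds, hds, hrd⟩ := ih hms₂ hinv'
          exact ⟨NetworkEvent.NewConnection c :: ds, SpecRun.connect c hds,
            network_reordered_.server hsvd hrd⟩
      | ToServer c b =>
          obtain ⟨hcst, rest, hhead, rfl⟩ := hsv
          obtain ⟨conn, hmem, hcid, hstR, rfl⟩ := hstep
          subst hcid
          obtain ⟨hsc, hacc, hwfc, hRS⟩ := hconns conn hmem
          have hrb : rbufL σ.1 conn.conn_id = conn.recvBuf :=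
            rbufL_some (connOf_nodup_mem hnd hmem)
          have hsb : sbufL σ.1 conn.conn_id = conn.sendBuf :=
            sbufL_some (connOf_nodup_mem hnd hmem)
          have hRSall : ∀ x ∈ σ.1,
              x.state = ConnState.RECVING ∨ x.state = ConnState.SENDING :=
            fun x hx => (hconns x hx).2.2.2
          have hsbe : conn.sendBuf = [] := (hwfc.1 hstR).2
          by_cases hcmpl : (conn.recvBuf ++ [b]).length = msgLen
          · have hupd : recvUpd conn [b] σ.2 =
                ({ conn with
                    state := ConnState.SENDING
                    recvBuf := []
                    sendBuf := σ.2.1 }, ⟨conn.recvBuf ++ [b], hcmpl⟩) := by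
              unfold recvUpd; rw [dif_pos hcmpl]
            rw [hupd] at hms₂
            have hstatc : (ns_d conn.conn_id).status = ConnectionStatus.ACCEPTED :=
              (hstat _).trans hacc
            have htoc : (ns_d conn.conn_id).toServer = (conn.recvBuf ++ [b]) ++ rest := by
              rw [hto _, hrb, hhead]
              simp
            have htrans1 := ts_consume conn.conn_id (conn.recvBuf ++ [b]) rest ns_d
              (Or.inr hstatc) htoc
            have hstatc1 : ((updateNs ns_d conn.conn_id
                { ns_d conn.conn_id with toServer := rest }) conn.conn_id).status =
                ConnectionStatus.ACCEPTED := by rw [updateNs_eq]; exact hstatc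
            have htrans2 := fs_produce conn.conn_id σ.2.1
              (updateNs ns_d conn.conn_id { ns_d conn.conn_id with toServer := rest }) hstatc1
            have hconnOfEq := connOf_replace_eq (conn' := { conn with
              state := ConnState.SENDING
              recvBuf := []
              sendBuf := σ.2.1 }) hmem hRSall rfl
            have hinv' : INV
                (replace_when (pfor conn.conn_id)
                  ({ conn with
                    state := ConnState.SENDING
                    recvBuf := []
                    sendBuf := σ.2.1 } : Connection) σ.1, ⟨conn.recvBuf ++ [b], hcmpl⟩)
                (updateNs ns conn.conn_id { ns conn.conn_id with toServer := rest })
                (updateNs (updateNs ns_d conn.conn_id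
                    { ns_d conn.conn_id with toServer := rest }) conn.conn_id
                  { (updateNs ns_d conn.conn_id
                      { ns_d conn.conn_id with toServer := rest }) conn.conn_id with
                    fromServer := ((updateNs ns_d conn.conn_id
                      { ns_d conn.conn_id with toServer := rest }) conn.conn_id).fromServer
                      ++ σ.2.1 })
                sconns := by
              refine ⟨?_, ?_, ?_, ?_, ?_⟩
              · intro cid; by_cases hc : cid = conn.conn_id
                · rw [hc, updateNs_eq, updateNs_eq, updateNs_eq]
                  exact hstat conn.conn_id
                · rw [updateNs_ne hc, updateNs_ne hc, updateNs_ne hc]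
                  exact hstat cid
              · intro cid; by_cases hc : cid = conn.conn_id
                · rw [hc, updateNs_eq, updateNs_eq, updateNs_eq]
                  show rest = rbufL _ conn.conn_id ++ rest
                  rw [rbufL_some hconnOfEq]
                  rfl
                · rw [updateNs_ne hc, updateNs_ne hc, updateNs_ne hc]
                  show (ns_d cid).toServer = rbufL _ cid ++ (ns cid).toServer
                  rw [rbufL, connOf_replace_ne (conn' := { conn with
                    state := ConnState.SENDING
                    recvBuf := []
                    sendBuf := σ.2.1 }) rfl hc]
                  exact hto cid
              · intro cid; by_cases hc : cid = conn.conn_id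
                · rw [hc, updateNs_eq, updateNs_eq, updateNs_eq]
                  show (ns_d conn.conn_id).fromServer ++ σ.2.1 =
                    (ns conn.conn_id).fromServer ++ sbufL _ conn.conn_id
                  rw [sbufL_some hconnOfEq]
                  show (ns_d conn.conn_id).fromServer ++ σ.2.1 =
                    (ns conn.conn_id).fromServer ++ σ.2.1
                  rw [hfrom conn.conn_id, hsb, hsbe, List.append_nil]
                · rw [updateNs_ne hc, updateNs_ne hc, updateNs_ne hc]
                  show (ns_d cid).fromServer = (ns cid).fromServer ++ sbufL _ cid
                  rw [sbufL, connOf_replace_ne (conn' := { conn with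
                    state := ConnState.SENDING
                    recvBuf := []
                    sendBuf := σ.2.1 }) rfl hc]
                  exact hfrom cid
              · intro x hx
                rcases mem_replace_when_elim hx with rfl | hx'
                · refine ⟨hsc, ?_, ?_, Or.inr rfl⟩
                  · show ((updateNs ns conn.conn_id
                        { ns conn.conn_id with toServer := rest }) conn.conn_id).status =
                      ConnectionStatus.ACCEPTED
                    rw [updateNs_eq]
                    exact hacc
                  · exact ⟨fun h => ConnState.noConfusion h,
                      fun _ => ⟨rfl, message_ne_nil σ.2⟩⟩
                · obtain ⟨h1, h2, h3, h4⟩ := hconns x hx'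
                  refine ⟨h1, ?_, h3, h4⟩
                  by_cases hcc : x.conn_id = conn.conn_id
                  · rw [hcc, updateNs_eq]; rw [hcc] at h2; exact h2
                  · rw [updateNs_ne hcc]; exact h2
              · rw [map_conn_id_replace_when (c' := { conn with
                  state := ConnState.SENDING
                  recvBuf := []
                  sendBuf := σ.2.1 }) rfl]
                exact hnd
            obtain ⟨ds, hds, hrd⟩ := ih hms₂ hinv'
            refine ⟨(conn.recvBuf ++ [b]).map (NetworkEvent.ToServer conn.conn_id) ++
              (σ.2.1.map (NetworkEvent.FromServer conn.conn_id) ++ ds), ?_, ?_⟩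
            · exact SpecRun.exch conn.conn_id ⟨conn.recvBuf ++ [b], hcmpl⟩ hsc hds
            · exact reorder_prepend htrans1 (reorder_prepend htrans2 hrd)
          · have hupd : recvUpd conn [b] σ.2 =
                ({ conn with recvBuf := conn.recvBuf ++ [b] }, σ.2) := by
              unfold recvUpd; rw [dif_neg hcmpl]
            rw [hupd] at hms₂
            have hconnOfEq := connOf_replace_eq
              (conn' := { conn with recvBuf := conn.recvBuf ++ [b] }) hmem hRSall rfl
            have hinv' : INV
                (replace_when (pfor conn.conn_id)
                  ({ conn with recvBuf := conn.recvBuf ++ [b] } : Connection) σ.1, σ.2)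
                (updateNs ns conn.conn_id { ns conn.conn_id with toServer := rest })
                ns_d sconns := by
              refine ⟨?_, ?_, ?_, ?_, ?_⟩
              · intro cid; by_cases hc : cid = conn.conn_id
                · rw [hc, updateNs_eq]; exact hstat conn.conn_id
                · rw [updateNs_ne hc]; exact hstat cid
              · intro cid; by_cases hc : cid = conn.conn_id
                · rw [hc, updateNs_eq]
                  show (ns_d conn.conn_id).toServer = rbufL _ conn.conn_id ++ rest
                  rw [rbufL_some hconnOfEq]
                  show (ns_d conn.conn_id).toServer = (conn.recvBuf ++ [b]) ++ rest
                  rw [hto conn.conn_id, hrb, hhead]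
                  simp
                · rw [updateNs_ne hc]
                  show (ns_d cid).toServer = rbufL _ cid ++ (ns cid).toServer
                  rw [rbufL, connOf_replace_ne
                    (conn' := { conn with recvBuf := conn.recvBuf ++ [b] }) rfl hc]
                  exact hto cid
              · intro cid; by_cases hc : cid = conn.conn_id
                · rw [hc, updateNs_eq]
                  show (ns_d conn.conn_id).fromServer =
                    (ns conn.conn_id).fromServer ++ sbufL _ conn.conn_id
                  rw [sbufL_some hconnOfEq]
                  show (ns_d conn.conn_id).fromServer =
                    (ns conn.conn_id).fromServer ++ conn.sendBuf
                  rw [hfrom conn.conn_id, hsb]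
                · rw [updateNs_ne hc]
                  show (ns_d cid).fromServer = (ns cid).fromServer ++ sbufL _ cid
                  rw [sbufL, connOf_replace_ne
                    (conn' := { conn with recvBuf := conn.recvBuf ++ [b] }) rfl hc]
                  exact hfrom cid
              · intro x hx
                rcases mem_replace_when_elim hx with rfl | hx'
                · refine ⟨hsc, ?_, ?_, Or.inl hstR⟩
                  · show ((updateNs ns conn.conn_id
                        { ns conn.conn_id with toServer := rest }) conn.conn_id).status =
                      ConnectionStatus.ACCEPTED
                    rw [updateNs_eq]
                    exact hacc
                  · refine ⟨fun _ => ⟨?_, hsbe⟩, fun h => ?_⟩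
                    · have h1 : conn.recvBuf.length < msgLen := (hwfc.1 hstR).1
                      simp only [List.length_append, List.length_singleton] at hcmpl ⊢
                      omega
                    · exact absurd (hstR ▸ h) (fun hh => ConnState.noConfusion hh)
                · obtain ⟨h1, h2, h3, h4⟩ := hconns x hx'
                  refine ⟨h1, ?_, h3, h4⟩
                  by_cases hcc : x.conn_id = conn.conn_id
                  · rw [hcc, updateNs_eq]; rw [hcc] at h2; exact h2
                  · rw [updateNs_ne hcc]; exact h2
              · rw [map_conn_id_replace_when
                  (c' := { conn with recvBuf := conn.recvBuf ++ [b] }) rfl]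
                exact hnd
            obtain ⟨ds, hds, hrd⟩ := ih hms₂ hinv'
            exact ⟨ds, hds, hrd⟩
      | FromServer c b =>
          obtain ⟨hacc', rfl⟩ := hsv
          obtain ⟨conn, rest, hmem, hcid, hstS, hsbuf, rfl⟩ := hstep
          subst hcid
          obtain ⟨hsc, hacc, hwfc, hRS⟩ := hconns conn hmem
          have hrb : rbufL σ.1 conn.conn_id = conn.recvBuf :=
            rbufL_some (connOf_nodup_mem hnd hmem)
          have hsb : sbufL σ.1 conn.conn_id = conn.sendBuf :=
            sbufL_some (connOf_nodup_mem hnd hmem)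
          have hRSall : ∀ x ∈ σ.1,
              x.state = ConnState.RECVING ∨ x.state = ConnState.SENDING :=
            fun x hx => (hconns x hx).2.2.2
          have hconn'_id : (sendUpd conn 1).conn_id = conn.conn_id := sendUpd_conn_id conn 1
          have hconn'_rbuf : (sendUpd conn 1).recvBuf = conn.recvBuf := by
            unfold sendUpd; split <;> rfl
          have hconn'_sbuf : (sendUpd conn 1).sendBuf = rest := by
            unfold sendUpd
            rw [hsbuf]
            simp only [List.drop_succ_cons, List.drop_zero]
            split
            · next hre => rw [List.isEmpty_iff.1 hre]
            · rfl
          have hconn'_RS : (sendUpd conn 1).state = ConnState.RECVING ∨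
              (sendUpd conn 1).state = ConnState.SENDING := by
            unfold sendUpd; split
            · exact Or.inl rfl
            · exact Or.inr hstS
          have hconn'_wf : WFconn (sendUpd conn 1) := WFconn_sendUpd hwfc hstS
          have hconnOfEq := connOf_replace_eq (conn' := sendUpd conn 1) hmem hRSall hconn'_id
          have hinv' : INV
              (replace_when (pfor conn.conn_id) (sendUpd conn 1) σ.1, σ.2)
              (updateNs ns conn.conn_id
                { ns conn.conn_id with
                  fromServer := (ns conn.conn_id).fromServer ++ [b] })
              ns_d sconns := by
            refine ⟨?_, ?_, ?_, ?_, ?_⟩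
            · intro cid; by_cases hc : cid = conn.conn_id
              · rw [hc, updateNs_eq]; exact hstat conn.conn_id
              · rw [updateNs_ne hc]; exact hstat cid
            · intro cid; by_cases hc : cid = conn.conn_id
              · rw [hc, updateNs_eq]
                show (ns_d conn.conn_id).toServer =
                  rbufL _ conn.conn_id ++ (ns conn.conn_id).toServer
                rw [rbufL_some hconnOfEq, hconn'_rbuf, ← hrb]
                exact hto conn.conn_id
              · rw [updateNs_ne hc]
                show (ns_d cid).toServer = rbufL _ cid ++ (ns cid).toServer
                rw [rbufL, connOf_replace_ne (conn' := sendUpd conn 1) hconn'_id hc]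
                exact hto cid
            · intro cid; by_cases hc : cid = conn.conn_id
              · rw [hc, updateNs_eq]
                show (ns_d conn.conn_id).fromServer =
                  ((ns conn.conn_id).fromServer ++ [b]) ++ sbufL _ conn.conn_id
                rw [sbufL_some hconnOfEq, hconn'_sbuf, hfrom conn.conn_id, hsb, hsbuf]
                simp
              · rw [updateNs_ne hc]
                show (ns_d cid).fromServer = (ns cid).fromServer ++ sbufL _ cid
                rw [sbufL, connOf_replace_ne (conn' := sendUpd conn 1) hconn'_id hc]
                exact hfrom cid
            · intro x hx
              rcases mem_replace_when_elim hx with rfl | hx'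
              · refine ⟨by rw [hconn'_id]; exact hsc, ?_, hconn'_wf, hconn'_RS⟩
                rw [hconn'_id, updateNs_eq]
                exact hacc
              · obtain ⟨h1, h2, h3, h4⟩ := hconns x hx'
                refine ⟨h1, ?_, h3, h4⟩
                by_cases hcc : x.conn_id = conn.conn_id
                · rw [hcc, updateNs_eq]; rw [hcc] at h2; exact h2
                · rw [updateNs_ne hcc]; exact h2
            · rw [map_conn_id_replace_when hconn'_id]; exact hnd
          obtain ⟨ds, hds, hrd⟩ := ih hms₂ hinv'
          exact ⟨ds, hds, hrd⟩

/-- The implementation model network-refines the linear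
specification: any network trace that clients can observe from `impl_model`
over the network could also have been produced by `linear_spec`. -/
theorem impl_model_network_refines_linear_spec :
    ∀ tr : NetworkTrace,
      (∃ ts : NetworkTrace, is_impl_trace impl_model ts ∧ network_reordered ts tr) →
      (∃ ds : NetworkTrace, is_spec_trace linear_spec ds ∧ network_reordered ds tr) := by
  rintro tr ⟨ts, ⟨etr, r?, htr, hts⟩, hreord⟩
  subst hts
  obtain ⟨σe, hms⟩ := impl_msteps htr
  have hinv0 : INV (([], zeros) : ServerSt) initial_ns initial_ns [] := by
    refine ⟨fun _ => rfl, fun _ => rfl, fun _ => rfl,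
      fun conn hc => absurd hc List.not_mem_nil, List.nodup_nil⟩
  obtain ⟨ds, hrun, hrd⟩ := main_sim hreord hms hinv0
  exact ⟨ds, specRun_is_spec_trace hrun, hrd⟩
end

section
/- Proof rule for advancing the specification at a linearization point (nrefines_network_transition_): let s be a reasoning state, spec' an itree specE Unit, ns' a network_state, impl an itree implE Unit, and dtr a network trace. Suppose (i) for every trace dtr', if is_spec_trace spec' dtr' then is_spec_trace (get_spec s) (dtr ++ dtr'); (ii) server_transitions dtr (get_ns s) ns', i.e., the server side of the network transition system can take the sequence of steps labeled by dtr from state get_ns s to state ns'; and (iii) nrefines_ z (set_ns ns' (set_spec spec' s)) impl. Then nrefines_ z s impl. -/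
theorem network_reordered_server_prefix {dtr : NetworkTrace} {ns ns' : NetworkState}
    (h : server_transitions dtr ns ns') :
    ∀ {ts tc : NetworkTrace}, network_reordered_ ns' ts tc →
      network_reordered_ ns (dtr ++ ts) tc := by
  induction h with
  | nil => intro ts tc h; exact h
  | cons hstep _ ih => intro ts tc h; exact network_reordered_.server hstep (ih h)

/-- Proof rule for advancing the specification at a linearization
point: if every trace of `spec'` prefixed with `dtr` is a trace of `get_spec s`,
the server side of the network can take the steps labeled by `dtr` from
`get_ns s` to `ns'`, and `impl` satisfies `nrefines_` in the updated state, then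
`impl` satisfies `nrefines_` in `s`. -/
theorem nrefines_network_transition_ (z : ℕ) (s : SState) (spec' : ITree SpecE Unit)
    (ns' : NetworkState) (impl : ITree ImplE Unit) (dtr : NetworkTrace)
    (hspec : ∀ dtr' : NetworkTrace,
        is_spec_trace spec' dtr' → is_spec_trace s.get_spec (dtr ++ dtr'))
    (htrans : server_transitions dtr s.get_ns ns')
    (hrest : nrefines_ z (set_ns ns' (set_spec spec' s)) impl) :
    nrefines_ z s impl := by
  intro tr htr
  obtain ⟨dstr, hre, hsp⟩ := hrest tr htr
  exact ⟨dtr ++ dstr, network_reordered_server_prefix htrans hre, hspec dstr hsp⟩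
end

section
/- Equivalence up to Tau is an equivalence relation: for any event signature E and result type R, the weak bisimulation relation ≡ on itree E R is reflexive, symmetric, and transitive. -/
namespace ITreeAux

open ITree

variable {E : Type → Type} {R : Type}

lemma mk_inj {t u : (ITreeF E R).Obj (ITree E R)}
    (h : PFunctor.M.mk t = PFunctor.M.mk u) : t = u := by
  have := congrArg PFunctor.M.dest h
  exact (PFunctor.M.dest_mk t).symm.trans (this.trans (PFunctor.M.dest_mk u))

lemma ret_inj {r r' : R} (h : (ret r : ITree E R) = ret r') : r = r' := by
  have h2 := congrArg Sigma.fst (mk_inj h)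
  injection h2 with h3

lemma tau_inj {t t' : ITree E R} (h : (tau t : ITree E R) = tau t') : t = t' := by
  have h2 := mk_inj h
  injection h2 with hf hs
  exact congrFun hs PUnit.unit

lemma ret_ne_tau (r : R) (t : ITree E R) : (ret r : ITree E R) ≠ tau t := by
  intro h
  have := congrArg Sigma.fst (mk_inj h)
  simp at this

lemma ret_ne_vis {X : Type} (r : R) (e : E X) (k : X → ITree E R) :
    (ret r : ITree E R) ≠ vis e k := by
  intro h
  have := congrArg Sigma.fst (mk_inj h)
  simp at this

lemma vis_ne_tau {X : Type} (e : E X) (k : X → ITree E R) (t : ITree E R) :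
    (vis e k : ITree E R) ≠ tau t := by
  intro h
  have := congrArg Sigma.fst (mk_inj h)
  simp at this

lemma vis_inj {X X' : Type} {e : E X} {e' : E X'} {k : X → ITree E R} {k' : X' → ITree E R}
    (h : vis e k = vis e' k') : ∃ hX : X = X', HEq e e' ∧ HEq k k' := by
  have h2 := mk_inj h
  have hfst := congrArg Sigma.fst h2
  simp only [ITree.vis] at hfst
  rcases hfst with ⟨⟩
  refine ⟨rfl, HEq.rfl, ?_⟩
  have hsnd : (fun x : ULift X => k x.down) = fun x : ULift X => k' x.down := by
    injection h2 with hf hs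
  have : k = k' := by
    funext x
    exact congrFun hsnd ⟨x⟩
  exact this ▸ HEq.rfl

/-- Any tree is a `ret`, a `tau`, or a `vis`. -/
lemma head_cases (t : ITree E R) :
    (∃ r, t = ret r) ∨ (∃ t', t = tau t') ∨
      (∃ (X : Type) (e : E X) (k : X → ITree E R), t = vis e k) := by
  have ht : t = PFunctor.M.mk (PFunctor.M.dest t) := (PFunctor.M.mk_dest t).symm
  rcases hd : PFunctor.M.dest t with ⟨s, ch⟩
  rw [hd] at ht
  cases s with
  | ret r =>
    left
    refine ⟨r, ?_⟩
    rw [ht]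
    unfold ITree.ret
    have hch : ch = fun x => PEmpty.elim x := funext fun x => PEmpty.elim x
    rw [hch]
    rfl
  | tau =>
    right; left; exact ⟨ch PUnit.unit, by rw [ht]; unfold ITree.tau; rfl⟩
  | vis X e =>
    right; right
    exact ⟨X, e, fun x => ch ⟨x⟩, by rw [ht]; unfold ITree.vis; rfl⟩

lemma untaus_tau_inv {t u : ITree E R} (h : Untaus (tau t) u) : Untaus t u := by
  generalize hs : (tau t : ITree E R) = s at h
  cases h with
  | base h0 => exact absurd hs.symm (h0 t)
  | step h0 => rwa [tau_inj hs]

lemma untaus_det {t t' u' : ITree E R} (h1 : Untaus t t') (h2 : Untaus t u') : t' = u' := by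
  induction h1 generalizing u' with
  | base h =>
    cases h2 with
    | base _ => rfl
    | step _ => exact absurd rfl (h _)
  | step h ih => exact ih (untaus_tau_inv h2)

lemma untaus_not_tau {t t' : ITree E R} (h : Untaus t t') : ∀ s, t' ≠ tau s := by
  induction h with
  | base h => exact h
  | step _ ih => exact ih

lemma isEuttRel_eq : IsEuttRel (Eq : ITree E R → ITree E R → Prop) := by
  intro t u h
  subst h
  refine ⟨Iff.rfl, fun t' u' h1 h2 => ?_⟩
  have := untaus_det h1 h2
  subst this
  rcases head_cases t' with ⟨r, rfl⟩ | ⟨s, rfl⟩ | ⟨X, e, k, rfl⟩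
  · exact Or.inl ⟨r, rfl, rfl⟩
  · exact absurd rfl (untaus_not_tau h1 s)
  · exact Or.inr ⟨X, e, k, k, rfl, rfl, fun _ => rfl⟩

lemma isEuttRel_flip {Rel : ITree E R → ITree E R → Prop} (h : IsEuttRel Rel) :
    IsEuttRel (fun t u => Rel u t) := by
  intro t u hr
  obtain ⟨hf, hh⟩ := h u t hr
  refine ⟨hf.symm, fun t' u' h1 h2 => ?_⟩
  rcases hh u' t' h2 h1 with ⟨r, rfl, rfl⟩ | ⟨X, e, k, k', rfl, rfl, hk⟩
  · exact Or.inl ⟨r, rfl, rfl⟩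
  · exact Or.inr ⟨X, e, k', k, rfl, rfl, fun x => hk x⟩

lemma isEuttRel_comp {R1 R2 : ITree E R → ITree E R → Prop}
    (h1 : IsEuttRel R1) (h2 : IsEuttRel R2) :
    IsEuttRel (fun t v => ∃ u, R1 t u ∧ R2 u v) := by
  rintro t v ⟨u, htu, huv⟩
  obtain ⟨hf1, hh1⟩ := h1 t u htu
  obtain ⟨hf2, hh2⟩ := h2 u v huv
  refine ⟨hf1.trans hf2, fun t' v' ht hv => ?_⟩
  obtain ⟨u', hu⟩ : FiniteTaus u := hf1.mp ⟨t', ht⟩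
  rcases hh1 t' u' ht hu with ⟨r, rfl, hu'⟩ | ⟨X, e, k, k', rfl, hu', hk⟩
  · rcases hh2 u' v' hu hv with ⟨r2, hu2, rfl⟩ | ⟨X, e, k, k', hu2, rfl, _⟩
    · subst hu'
      exact Or.inl ⟨r, rfl, congrArg ret (ret_inj hu2).symm⟩
    · exact absurd (hu'.symm.trans hu2) (ret_ne_vis _ _ _)
  · rcases hh2 u' v' hu hv with ⟨r2, hu2, rfl⟩ | ⟨X2, e2, k2, k2', hu2, rfl, hk2⟩
    · exact absurd (hu2.symm.trans hu') (ret_ne_vis _ _ _)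
    · subst hu'
      obtain ⟨hX, he, hkk⟩ := vis_inj hu2
      subst hX
      cases he
      cases eq_of_heq hkk
      exact Or.inr ⟨X, e, k, k2', rfl, rfl, fun x => ⟨k' x, hk x, hk2 x⟩⟩

end ITreeAux

/-- Equivalence up to `Tau` is an equivalence relation:
it is reflexive, symmetric, and transitive. -/
theorem eutt_equivalence (E : Type → Type) (R : Type) :
    Equivalence (ITree.Eutt (E := E) (R := R)) := by
  constructor
  · intro t
    exact ⟨Eq, ITreeAux.isEuttRel_eq, rfl⟩
  · rintro t u ⟨Rel, hR, htu⟩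
    exact ⟨fun a b => Rel b a, ITreeAux.isEuttRel_flip hR, htu⟩
  · rintro t u v ⟨R1, h1, htu⟩ ⟨R2, h2, huv⟩
    exact ⟨fun a b => ∃ c, R1 a c ∧ R2 c b, ITreeAux.isEuttRel_comp h1 h2, u, htu, huv⟩
end
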